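/- arXiv:0805.1467 — 6 statements merged into one kernel-verified Lean document; each statement's English description precedes it below -/
import Mathlib

section
/- Sylvester's identity holds as formal power series: ∏_{q≥1}(1 + t x^q) = 1 + Σ_{q≥1} t^q x^{(3q²−q)/2} · (1+tx)(1+tx²)···(1+tx^{q−1})(1+tx^{2q}) / ((1−x)(1−x²)···(1−x^q)). -/
/-- A `lam`-partition: a strictly increasing list of positive integers whose
consecutive differences are at least `lam`. -/
def IsLamPartition (lam : ℕ) (l : List ℕ) : Prop :=
  l.Chain' (fun a b => a + lam ≤ b) ∧ ∀ i ∈ l, 0 < i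

/-- A partition into distinct parts: a strictly increasing list of positive integers. -/
def IsDistinctPartition (l : List ℕ) : Prop :=
  l.Chain' (· < ·) ∧ ∀ i ∈ l, 0 < i

/-- Auxiliary: given the previous part `p`, collect the parts starting a new maximal
dense block (i.e. those preceded by a gap `> lam`). -/
def blockStartsAux (lam : ℕ) : ℕ → List ℕ → List ℕ
  | _, [] => []
  | p, a :: t => (if p + lam < a then [a] else []) ++ blockStartsAux lam a t

/-- The smallest parts of the maximal dense blocks of a `lam`-partition. -/
def blockStarts (lam : ℕ) : List ℕ → List ℕ
  | [] => []
  | a :: t => a :: blockStartsAux lam a t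

/-- The leading parts of a `lam`-partition (for `lam ∈ {2,3}`): smallest parts of the
maximal dense blocks of index 1 (for `lam = 3`: smallest part `> 2`; for `lam = 2`:
smallest part odd and `> 1`). -/
def leadingParts (lam : ℕ) (l : List ℕ) : List ℕ :=
  if lam = 2 then (blockStarts 2 l).filter (fun a => decide (1 < a ∧ a % 2 = 1))
  else (blockStarts lam l).filter (fun a => decide (2 < a))

/-- The index of a `lam`-partition: the number of maximal dense blocks of index 1. -/
def lamIndex (lam : ℕ) (l : List ℕ) : ℕ := (leadingParts lam l).length

/-- A marked `lam`-partition: a `lam`-partition together with a set of marked parts,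
which must be a subset of its leading parts. -/
def IsMarked (lam : ℕ) (p : List ℕ × Finset ℕ) : Prop :=
  IsLamPartition lam p.1 ∧ ∀ a ∈ p.2, a ∈ leadingParts lam p.1

noncomputable section SylAux

open PowerSeries Finset

/-- Base ring. -/
abbrev S6 : Type := PowerSeries (Polynomial ℤ)

def Ct6 : S6 := PowerSeries.C (R := Polynomial ℤ) Polynomial.X

local notation "XX" => (PowerSeries.X : S6)

def e6 (q : ℕ) : ℕ := (3 * q ^ 2 - q) / 2

lemma two_e6 (q : ℕ) : 3 * q ^ 2 - q = 2 * e6 q := by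
  obtain ⟨c, hc⟩ : ∃ c, 3 * q ^ 2 - q = 2 * c := by
    induction q with
    | zero => exact ⟨0, rfl⟩
    | succ k ih =>
      obtain ⟨c, hc⟩ := ih
      refine ⟨c + 3 * k + 1, ?_⟩
      have h1 : 3 * (k + 1) ^ 2 = 3 * k ^ 2 + (6 * k + 3) := by ring
      have h2 : k ≤ k ^ 2 := Nat.le_self_pow two_ne_zero k
      rw [h1]; omega
  unfold e6; omega

lemma e6_succ (q : ℕ) : e6 (q + 1) = e6 q + (3 * q + 1) := by
  have h1 := two_e6 q
  have h2 := two_e6 (q + 1)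
  have h3 : 3 * (q + 1) ^ 2 = 3 * q ^ 2 + (6 * q + 3) := by ring
  have h4 : q ≤ q ^ 2 := Nat.le_self_pow two_ne_zero q
  omega

lemma e6_succ_ge (q : ℕ) : q + 1 ≤ e6 (q + 1) := by
  induction q with
  | zero => norm_num [e6]
  | succ k ih => have := e6_succ (k + 1); omega

def D6 (q : ℕ) : S6 := ∏ j ∈ Icc 1 q, (1 - XX ^ j)

def iD6 (q : ℕ) : S6 := PowerSeries.invOfUnit (D6 q) 1

lemma constantCoeff_D6 (q : ℕ) :
    PowerSeries.constantCoeff (R := Polynomial ℤ) (D6 q) = 1 := by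
  unfold D6
  rw [map_prod]
  refine Finset.prod_eq_one fun j hj => ?_
  have hj1 : j ≠ 0 := by have := (Finset.mem_Icc.mp hj).1; omega
  simp [zero_pow hj1]

lemma D6_mul_iD6 (q : ℕ) : D6 q * iD6 q = 1 :=
  PowerSeries.mul_invOfUnit _ _ (by rw [constantCoeff_D6]; rfl)

lemma iD6_zero : iD6 0 = 1 := by
  have h := D6_mul_iD6 0
  have hD : D6 0 = 1 := by
    unfold D6
    rw [show Icc 1 0 = (∅ : Finset ℕ) from rfl, Finset.prod_empty]
  rw [hD, one_mul] at h
  exact h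

lemma iD6_succ (m : ℕ) : iD6 m = (1 - XX ^ (m + 1)) * iD6 (m + 1) := by
  have hD : D6 (m + 1) = D6 m * (1 - XX ^ (m + 1)) :=
    Finset.prod_Icc_succ_top (by omega) _
  calc iD6 m = iD6 m * (D6 (m + 1) * iD6 (m + 1)) := by rw [D6_mul_iD6, mul_one]
    _ = (D6 m * iD6 m) * ((1 - XX ^ (m + 1)) * iD6 (m + 1)) := by rw [hD]; ring
    _ = (1 - XX ^ (m + 1)) * iD6 (m + 1) := by rw [D6_mul_iD6, one_mul]

def Q6 (r m : ℕ) : S6 := ∏ j ∈ Finset.range m, (1 + Ct6 * XX ^ (r + 1 + j))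

lemma Q6_zero (r : ℕ) : Q6 r 0 = 1 := Finset.prod_range_zero _

lemma Q6_top (r m : ℕ) : Q6 r (m + 1) = Q6 r m * (1 + Ct6 * XX ^ (r + 1 + m)) :=
  Finset.prod_range_succ _ _

lemma Q6_bot (r m : ℕ) : Q6 r (m + 1) = (1 + Ct6 * XX ^ (r + 1)) * Q6 (r + 1) m := by
  unfold Q6
  rw [Finset.prod_range_succ']
  rw [show r + 1 + 0 = r + 1 from rfl]
  rw [mul_comm]
  refine congrArg ((1 + Ct6 * XX ^ (r + 1)) * ·) ?_
  refine Finset.prod_congr rfl fun j _ => ?_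
  rw [show r + 1 + (j + 1) = r + 1 + 1 + j from by omega]

lemma Q6_swap (r m : ℕ) :
    (1 + Ct6 * XX ^ (r + 1)) * Q6 (r + 1) m = Q6 r m * (1 + Ct6 * XX ^ (r + 1 + m)) := by
  rw [← Q6_bot, Q6_top]

def T6 (r q : ℕ) : S6 :=
  PowerSeries.C (R := Polynomial ℤ) (Polynomial.X ^ q) * XX ^ (e6 q + q * r) *
    Q6 r (q - 1) * (1 + Ct6 * XX ^ (2 * q + r)) * iD6 q

def W6 (r q : ℕ) : S6 :=
  PowerSeries.C (R := Polynomial ℤ) (Polynomial.X ^ q) * XX ^ (e6 q + q * r) *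
    Q6 r (q - 1) * iD6 (q - 1)

lemma step6 (r m : ℕ) :
    T6 r (m + 1) + W6 r (m + 2) =
      (1 + Ct6 * XX ^ (r + 1)) * T6 (r + 1) (m + 1) + W6 r (m + 1) := by
  have hq := Q6_swap r m
  have hiD := iD6_succ m
  have htop := Q6_top r m
  unfold T6 W6
  simp only [show m + 1 - 1 = m from rfl, show m + 2 - 1 = m + 1 from rfl,
    e6_succ (m + 1), map_pow, htop, hiD]
  have hCt : PowerSeries.C (R := Polynomial ℤ) Polynomial.X = Ct6 := rfl
  rw [hCt]
  linear_combination
    (-(Ct6 ^ (m + 1) * XX ^ (e6 (m + 1) + (m + 1) * r + (m + 1)) *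
      (1 + Ct6 * XX ^ (2 * (m + 1) + r + 1)) * iD6 (m + 1))) * hq

lemma sum_step6 (r n : ℕ) :
    (1 : S6) + ∑ q ∈ Icc 1 n, T6 r q =
      (1 + Ct6 * XX ^ (r + 1)) * (1 + ∑ q ∈ Icc 1 n, T6 (r + 1) q) - W6 r (n + 1) := by
  induction n with
  | zero =>
    simp only [show Icc 1 0 = (∅ : Finset ℕ) from rfl, Finset.sum_empty, add_zero, mul_one]
    unfold W6
    rw [show (1 : ℕ) - 1 = 0 from rfl, Q6_zero, iD6_zero,
      show e6 1 = 1 from rfl, map_pow]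
    have hCt : PowerSeries.C (R := Polynomial ℤ) Polynomial.X = Ct6 := rfl
    rw [hCt]
    ring
  | succ n ih =>
    rw [Finset.sum_Icc_succ_top (by omega : 1 ≤ n + 1),
      Finset.sum_Icc_succ_top (by omega : 1 ≤ n + 1)]
    linear_combination ih + step6 r n

lemma iter6 (n m : ℕ) :
    (1 : S6) + ∑ q ∈ Icc 1 n, T6 0 q =
      (∏ j ∈ Icc 1 m, (1 + Ct6 * XX ^ j)) * (1 + ∑ q ∈ Icc 1 n, T6 m q) -
        ∑ r ∈ Finset.range m, (∏ j ∈ Icc 1 r, (1 + Ct6 * XX ^ j)) * W6 r (n + 1) := by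
  induction m with
  | zero =>
    rw [show Icc 1 0 = (∅ : Finset ℕ) from rfl]
    simp
  | succ m ih =>
    rw [Finset.prod_Icc_succ_top (by omega : 1 ≤ m + 1), Finset.sum_range_succ]
    linear_combination ih + (∏ j ∈ Icc 1 m, (1 + Ct6 * XX ^ j)) * sum_step6 m n

lemma X_pow_dvd_T6 (n r q : ℕ) (h : n + 1 ≤ e6 q + q * r) : XX ^ (n + 1) ∣ T6 r q := by
  refine dvd_trans (pow_dvd_pow _ h) ?_
  unfold T6
  exact (((dvd_mul_left _ _).mul_right _).mul_right _).mul_right _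

lemma X_pow_dvd_W6 (n r q : ℕ) (h : n + 1 ≤ e6 q + q * r) : XX ^ (n + 1) ∣ W6 r q := by
  refine dvd_trans (pow_dvd_pow _ h) ?_
  unfold W6
  exact ((dvd_mul_left _ _).mul_right _).mul_right _

lemma coeff_zero_of_dvd {f : S6} {n : ℕ} (h : XX ^ (n + 1) ∣ f) :
    PowerSeries.coeff (R := Polynomial ℤ) n f = 0 :=
  PowerSeries.X_pow_dvd_iff.mp h n (Nat.lt_succ_self n)

end SylAux

/-- Sylvester's identity
`∏_{q≥1}(1+tx^q) = 1 + Σ_{q≥1} t^q x^{(3q²−q)/2} (1+tx)⋯(1+tx^{q−1})(1+tx^{2q}) /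
((1−x)⋯(1−x^q))`, stated coefficientwise in `x` over `Polynomial ℤ` (the variable `t`
is `Polynomial.X`); division means multiplication by the formal inverse, and factors or
terms that cannot contribute to the coefficient of `x^n` are omitted. -/
theorem stmt_6 (n : ℕ) :
    PowerSeries.coeff (R := Polynomial ℤ) n
        (∏ q ∈ Finset.Icc 1 n,
          (1 + PowerSeries.C (R := Polynomial ℤ) Polynomial.X *
            (PowerSeries.X : PowerSeries (Polynomial ℤ)) ^ q)) =
      PowerSeries.coeff (R := Polynomial ℤ) n
        (1 + ∑ q ∈ Finset.Icc 1 n,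
          PowerSeries.C (R := Polynomial ℤ) (Polynomial.X ^ q) *
            (PowerSeries.X : PowerSeries (Polynomial ℤ)) ^ ((3 * q ^ 2 - q) / 2) *
            (∏ j ∈ Finset.Icc 1 (q - 1),
              (1 + PowerSeries.C (R := Polynomial ℤ) Polynomial.X * PowerSeries.X ^ j)) *
            (1 + PowerSeries.C (R := Polynomial ℤ) Polynomial.X * PowerSeries.X ^ (2 * q)) *
            PowerSeries.invOfUnit
              (∏ j ∈ Finset.Icc 1 q,
                (1 - (PowerSeries.X : PowerSeries (Polynomial ℤ)) ^ j)) 1) := by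
  have hterm : ∀ q ∈ Finset.Icc 1 n,
      PowerSeries.C (R := Polynomial ℤ) (Polynomial.X ^ q) *
        (PowerSeries.X : PowerSeries (Polynomial ℤ)) ^ ((3 * q ^ 2 - q) / 2) *
        (∏ j ∈ Finset.Icc 1 (q - 1),
          (1 + PowerSeries.C (R := Polynomial ℤ) Polynomial.X * PowerSeries.X ^ j)) *
        (1 + PowerSeries.C (R := Polynomial ℤ) Polynomial.X * PowerSeries.X ^ (2 * q)) *
        PowerSeries.invOfUnit
          (∏ j ∈ Finset.Icc 1 q,
            (1 - (PowerSeries.X : PowerSeries (Polynomial ℤ)) ^ j)) 1 = T6 0 q := by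
    intro q _
    unfold T6 iD6 D6 Q6 e6 Ct6
    rw [← Finset.Ico_add_one_right_eq_Icc, Finset.prod_Ico_eq_prod_range]
    simp only [mul_zero, add_zero, zero_add, Nat.succ_sub_one, Nat.add_sub_cancel]
  rw [Finset.sum_congr rfl hterm]
  rw [iter6 n n]
  have h1 : PowerSeries.coeff (R := Polynomial ℤ) n
      (∑ r ∈ Finset.range n, (∏ j ∈ Finset.Icc 1 r, (1 + Ct6 * (PowerSeries.X : S6) ^ j)) * W6 r (n + 1)) = 0 := by
    apply coeff_zero_of_dvd
    refine Finset.dvd_sum fun r _ => Dvd.dvd.mul_left ?_ _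
    apply X_pow_dvd_W6
    have := e6_succ_ge n
    omega
  have h2 : PowerSeries.coeff (R := Polynomial ℤ) n
      ((∏ j ∈ Finset.Icc 1 n, (1 + Ct6 * (PowerSeries.X : S6) ^ j)) * (∑ q ∈ Finset.Icc 1 n, T6 n q)) = 0 := by
    apply coeff_zero_of_dvd
    refine Dvd.dvd.mul_left ?_ _
    refine Finset.dvd_sum fun q hq => ?_
    apply X_pow_dvd_T6
    obtain ⟨hq1, hq2⟩ := Finset.mem_Icc.mp hq
    obtain ⟨m, rfl⟩ : ∃ m, q = m + 1 := ⟨q - 1, by omega⟩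
    have h3 := e6_succ_ge m
    have h4 : 1 * n ≤ (m + 1) * n := Nat.mul_le_mul_right n (by omega)
    omega
  rw [map_sub, h1, sub_zero, mul_add, mul_one, map_add, h2, add_zero]
  rfl
end

section
/- The number of 2-partitions of n with q parts and index 0 equals the coefficient of t^q x^n in the formal power series ∏_{s≥1}(1 + t x^{2s}) · (1 + Σ_{r≥1} t^r x^{r²} / ((1+tx²)(1+tx⁴)···(1+tx^{2r}))). -/
/-! ### auxiliary definitions and lemmas -/


def odds : ℕ → ℕ → List ℕ
  | _, 0 => []
  | k, r+1 => (2*k+1) :: odds (k+1) r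

def evs (S : Finset ℕ) : List ℕ := (S.sort (· ≤ ·)).map (fun s => 2*s)

def encList (r : ℕ) (S : Finset ℕ) : List ℕ := odds 0 r ++ evs S

lemma odds_sum (r : ℕ) : ∀ k, (odds k r).sum = 2*k*r + r^2 := by
  induction r with
  | zero => intro k; simp [odds]
  | succ r ih => intro k; simp [odds, ih (k+1)]; ring

lemma odds_length (r : ℕ) : ∀ k, (odds k r).length = r := by
  induction r with
  | zero => intro k; rfl
  | succ r ih => intro k; simp [odds, ih (k+1)]

lemma mem_odds {r : ℕ} : ∀ {k a}, a ∈ odds k r → a % 2 = 1 ∧ 2*k+1 ≤ a ∧ a ≤ 2*(k+r)-1 := by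
  induction r with
  | zero => intro k a h; simp [odds] at h
  | succ r ih =>
      intro k a h
      simp only [odds, List.mem_cons] at h
      rcases h with h | h
      · subst h; omega
      · have := ih h; omega

lemma rel_of_chain' : ∀ (t : List ℕ) (a : ℕ),
    List.Chain' (fun a b => a + 2 ≤ b) (a :: t) → ∀ x ∈ t, a + 2 ≤ x := by
  intro t
  induction t with
  | nil => intro a _ x hx; simp at hx
  | cons b t ih =>
      intro a h x hx
      simp only [List.Chain', List.isChain_cons_cons] at h
      rcases List.mem_cons.1 hx with rfl | hx
      · exact h.1
      · have := ih b h.2 x hx; omega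

lemma pairwise_of_chain' : ∀ (l : List ℕ),
    List.Chain' (fun a b => a + 2 ≤ b) l → l.Pairwise (fun a b => a + 2 ≤ b) := by
  intro l
  induction l with
  | nil => intro; simp
  | cons a t ih =>
      intro h
      exact List.Pairwise.cons (rel_of_chain' t a h) (ih h.tail)

lemma chain'_odds_append (r : ℕ) : ∀ (k : ℕ) (e : List ℕ),
    (∀ y ∈ e.head?, 2*(k+r) + 2 ≤ y) → List.Chain' (fun a b => a + 2 ≤ b) e →
    List.Chain' (fun a b => a + 2 ≤ b) (odds k r ++ e) := by
  induction r with
  | zero => intro k e _ he; simpa [odds] using he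
  | succ r ih =>
      intro k e hy he
      have hrec := ih (k+1) e (by intro y hy'; have := hy y hy'; omega) he
      simp only [odds, List.cons_append]
      simp only [List.Chain', List.isChain_cons]
      refine ⟨?_, hrec⟩
      intro y hy'
      rcases r with _ | r
      · simp only [odds, List.nil_append] at hy'
        have := hy y hy'; omega
      · simp [odds, List.head?] at hy'; omega

lemma evs_sum (S : Finset ℕ) : (evs S).sum = 2 * S.sum id := by
  have hp : List.Perm (evs S) (S.toList.map (fun s => 2*s)) :=
    (Finset.sort_perm_toList S (· ≤ ·)).map _
  rw [hp.sum_eq, Finset.sum_map_toList]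
  simp [Finset.mul_sum]

lemma evs_length (S : Finset ℕ) : (evs S).length = S.card := by
  simp [evs, Finset.length_sort]

lemma mem_evs {S : Finset ℕ} {x : ℕ} : x ∈ evs S ↔ ∃ s ∈ S, x = 2*s := by
  simp [evs, eq_comm]

lemma evs_chain' (S : Finset ℕ) : List.Chain' (fun a b => a + 2 ≤ b) (evs S) := by
  have := List.sortedLT_iff_pairwise.1 (Finset.sortedLT_sort S)
  refine List.Pairwise.isChain ?_
  rw [evs, List.pairwise_map]
  exact this.imp (by intro a b h; omega)

lemma exists_finset (e : List ℕ) (hev : ∀ x ∈ e, x % 2 = 0)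
    (hc : List.Chain' (fun a b => a + 2 ≤ b) e) : ∃ S : Finset ℕ, e = evs S := by
  have hpw : e.Pairwise (fun a b => a + 2 ≤ b) := pairwise_of_chain' e hc
  set d := e.map (fun x => x / 2) with hd
  have hdp : d.Pairwise (· < ·) := by
    rw [hd, List.pairwise_map]
    refine hpw.imp_of_mem ?_
    intro a b ha hb h
    have := hev a ha
    omega
  have hnd : d.Nodup := hdp.imp (fun h => Nat.ne_of_lt h)
  have hsorted : d.Pairwise (· ≤ ·) := hdp.imp (fun h => Nat.le_of_lt h)
  refine ⟨d.toFinset, ?_⟩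
  rw [evs, (List.toFinset_sort (· ≤ ·) hnd).2 hsorted, hd, List.map_map]
  have : ∀ x ∈ e, ((fun s => 2*s) ∘ fun x => x / 2) x = id x := by
    intro x hx; have := hev x hx; simp; omega
  rw [List.map_congr_left this, List.map_id]

/-! ### block starts -/

lemma mem_of_mem_aux : ∀ (t : List ℕ) (p a : ℕ), a ∈ blockStartsAux 2 p t → a ∈ t := by
  intro t
  induction t with
  | nil => intro p a h; simp [blockStartsAux] at h
  | cons b t ih =>
      intro p a h
      simp only [blockStartsAux, List.mem_append] at h
      rcases h with h | h
      · split at h <;> simp_all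
      · exact List.mem_cons_of_mem _ (ih b a h)

lemma aux_odds (m : ℕ) : ∀ (k : ℕ) (e : List ℕ),
    blockStartsAux 2 (2*k+1) (odds (k+1) m ++ e) = blockStartsAux 2 (2*(k+m)+1) e := by
  induction m with
  | zero => intro k e; simp [odds]
  | succ m ih =>
      intro k e
      simp only [odds, List.cons_append, blockStartsAux]
      rw [if_neg (by omega), List.nil_append]
      show blockStartsAux 2 (2*(k+1)+1) (odds (k+1+1) m ++ e) = _
      rw [ih (k+1) e]
      congr 1
      omega

lemma lamIndex_eq_zero_iff (l : List ℕ) :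
    lamIndex 2 l = 0 ↔ ∀ a ∈ blockStarts 2 l, ¬(1 < a ∧ a % 2 = 1) := by
  rw [lamIndex, leadingParts, if_pos rfl, List.length_eq_zero_iff, List.filter_eq_nil_iff]
  simp

lemma aux_cond_tail {p a : ℕ} {t : List ℕ}
    (h : ∀ b ∈ blockStartsAux 2 p (a :: t), ¬(1 < b ∧ b % 2 = 1)) :
    ∀ b ∈ blockStartsAux 2 a t, ¬(1 < b ∧ b % 2 = 1) := by
  intro b hb
  exact h b (by simp only [blockStartsAux, List.mem_append]; right; exact hb)

lemma all_even (t : List ℕ) : ∀ (p : ℕ), p % 2 = 0 →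
    List.Chain' (fun a b => a + 2 ≤ b) (p :: t) →
    (∀ a ∈ blockStartsAux 2 p t, ¬(1 < a ∧ a % 2 = 1)) →
    ∀ x ∈ t, x % 2 = 0 := by
  induction t with
  | nil => intro p _ _ _ x hx; simp at hx
  | cons a t ih =>
      intro p hp hc haux x hx
      have hpa : p + 2 ≤ a := (List.isChain_cons_cons.1 hc).1
      have ha : a % 2 = 0 := by
        rcases Nat.lt_or_ge (p+2) a with h | h
        · have := haux a (by simp [blockStartsAux, if_pos h])
          omega
        · omega
      rcases List.mem_cons.1 hx with rfl | hx
      · exact ha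
      · exact ih a ha (List.isChain_cons_cons.1 hc).2 (aux_cond_tail haux) x hx

lemma odd_prefix (t : List ℕ) : ∀ (k : ℕ),
    List.Chain' (fun a b => a + 2 ≤ b) ((2*k+1) :: t) →
    (∀ a ∈ blockStartsAux 2 (2*k+1) t, ¬(1 < a ∧ a % 2 = 1)) →
    ∃ m e, t = odds (k+1) m ++ e ∧ ∀ x ∈ e, x % 2 = 0 ∧ 2*(k+m)+4 ≤ x := by
  induction t with
  | nil => intro k _ _; exact ⟨0, [], by simp [odds], by simp⟩
  | cons a t ih =>
      intro k hc haux
      have hpa : 2*k+1 + 2 ≤ a := (List.isChain_cons_cons.1 hc).1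
      rcases Nat.lt_or_ge (2*k+1+2) a with h | h
      · have ha : a % 2 = 0 := by
          have := haux a (by simp [blockStartsAux, if_pos h]); omega
        refine ⟨0, a :: t, by simp [odds], ?_⟩
        intro x hx
        have hev := all_even t a ha (List.isChain_cons_cons.1 hc).2 (aux_cond_tail haux)
        rcases List.mem_cons.1 hx with rfl | hx
        · exact ⟨ha, by omega⟩
        · exact ⟨hev x hx, by have := rel_of_chain' t a (List.isChain_cons_cons.1 hc).2 x hx; omega⟩
      · have ha : a = 2*(k+1)+1 := by omega
        subst ha
        obtain ⟨m, e, ht, he⟩ := ih (k+1) (List.isChain_cons_cons.1 hc).2 (by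
          have := aux_cond_tail haux
          simpa using this)
        refine ⟨m+1, e, ?_, ?_⟩
        · rw [ht]; simp [odds]
        · intro x hx; have := he x hx; omega

/-! ### properties of `encList` -/

lemma encList_sum (r : ℕ) (S : Finset ℕ) : (encList r S).sum = r^2 + 2 * S.sum id := by
  simp [encList, odds_sum, evs_sum]

lemma encList_length (r : ℕ) (S : Finset ℕ) : (encList r S).length = r + S.card := by
  simp [encList, odds_length, evs_length]

lemma encList_partition {r : ℕ} {S : Finset ℕ} (hS : ∀ s ∈ S, r+1 ≤ s) :
    IsLamPartition 2 (encList r S) := by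
  constructor
  · refine chain'_odds_append r 0 (evs S) ?_ (evs_chain' S)
    intro y hy
    obtain ⟨s, hs, rfl⟩ := mem_evs.1 (List.mem_of_mem_head? hy)
    have := hS s hs; omega
  · intro i hi
    rcases List.mem_append.1 hi with h | h
    · have := mem_odds h; omega
    · obtain ⟨s, hs, rfl⟩ := mem_evs.1 h
      have := hS s hs; omega

lemma encList_index (r : ℕ) (S : Finset ℕ) : lamIndex 2 (encList r S) = 0 := by
  rw [lamIndex_eq_zero_iff]
  rcases r with _ | m
  · -- no odd parts
    rcases he : evs S with _ | ⟨a, t⟩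
    · intro x hx
      simp [encList, odds, he, blockStarts] at hx
    · intro x hx
      have : encList 0 S = a :: t := by simp [encList, odds, he]
      rw [this, blockStarts] at hx
      have hx' : x ∈ a :: t := by
        rcases List.mem_cons.1 hx with rfl | hx
        · exact List.mem_cons_self
        · exact List.mem_cons_of_mem _ (mem_of_mem_aux t a x hx)
      rw [← he] at hx'
      obtain ⟨s, _, rfl⟩ := mem_evs.1 hx'
      omega
  · intro x hx
    have : encList (m+1) S = (2*0+1) :: (odds (0+1) m ++ evs S) := by
      simp [encList, odds]
    rw [this, blockStarts, aux_odds m 0 (evs S)] at hx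
    rcases List.mem_cons.1 hx with rfl | hx
    · omega
    · obtain ⟨s, _, rfl⟩ := mem_evs.1 (mem_of_mem_aux _ _ _ hx)
      omega

lemma encList_inj {r r' : ℕ} {S S' : Finset ℕ}
    (h : encList r S = encList r' S') : r = r' ∧ S = S' := by
  have hfil : ∀ (r : ℕ) (S : Finset ℕ),
      (encList r S).filter (fun x => decide (x % 2 = 1)) = odds 0 r := by
    intro r S
    rw [encList, List.filter_append]
    have h1 : (odds 0 r).filter (fun x => decide (x % 2 = 1)) = odds 0 r := by
      rw [List.filter_eq_self]
      intro a ha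
      simpa using (mem_odds ha).1
    have h2 : (evs S).filter (fun x => decide (x % 2 = 1)) = [] := by
      rw [List.filter_eq_nil_iff]
      intro a ha
      obtain ⟨s, _, rfl⟩ := mem_evs.1 ha
      simp
    rw [h1, h2, List.append_nil]
  have hodds : odds 0 r = odds 0 r' := by rw [← hfil r S, ← hfil r' S', h]
  have hr : r = r' := by
    have := congrArg List.length hodds
    rwa [odds_length, odds_length] at this
  subst hr
  refine ⟨rfl, ?_⟩
  have hev : evs S = evs S' := by
    have := h
    rw [encList, encList] at this
    exact List.append_cancel_left this
  have hsort : S.sort (· ≤ ·) = S'.sort (· ≤ ·) :=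
    List.map_injective_iff.2 (by intro a b hab; simp only [] at hab; omega) hev
  have := congrArg List.toFinset hsort
  rwa [Finset.sort_toFinset, Finset.sort_toFinset] at this

lemma decode {n q : ℕ} {l : List ℕ} (hp : IsLamPartition 2 l) (hsum : l.sum = n)
    (hlen : l.length = q) (hidx : lamIndex 2 l = 0) :
    ∃ r S, r ≤ n ∧ (∀ s ∈ S, r+1 ≤ s ∧ s ≤ n) ∧ n = r^2 + 2 * S.sum id ∧
      q = r + S.card ∧ l = encList r S := by
  have hbs := (lamIndex_eq_zero_iff l).1 hidx
  have key : ∃ r S, (∀ s ∈ S, r+1 ≤ s) ∧ l = encList r S := by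
    rcases l with _ | ⟨a, t⟩
    · exact ⟨0, ∅, by simp, by simp [encList, odds, evs]⟩
    · have hcond_a : ¬(1 < a ∧ a % 2 = 1) := hbs a (by rw [blockStarts]; exact List.mem_cons_self)
      have haux : ∀ b ∈ blockStartsAux 2 a t, ¬(1 < b ∧ b % 2 = 1) := by
        intro b hb
        exact hbs b (by rw [blockStarts]; exact List.mem_cons_of_mem _ hb)
      have hchain : List.Chain' (fun a b => a + 2 ≤ b) (a :: t) := hp.1
      have hapos : 0 < a := hp.2 a (List.mem_cons_self)
      rcases Nat.even_or_odd a with he | ho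
      · -- all parts even
        have hae : a % 2 = 0 := Nat.even_iff.1 he
        have hev : ∀ x ∈ a :: t, x % 2 = 0 := by
          intro x hx
          rcases List.mem_cons.1 hx with rfl | hx
          · exact hae
          · exact all_even t a hae hchain haux x hx
        obtain ⟨S, hS⟩ := exists_finset (a :: t) hev hchain
        refine ⟨0, S, ?_, by simpa [encList, odds] using hS⟩
        intro s hs
        have : 2*s ∈ a :: t := by rw [hS]; exact mem_evs.2 ⟨s, hs, rfl⟩
        have := hp.2 _ this
        omega
      · -- head is odd, hence equals 1
        have ha1 : a = 2*0+1 := by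
          rcases ho with ⟨u, hu⟩
          omega
        subst ha1
        obtain ⟨m, e, ht, hee⟩ := odd_prefix t 0 hchain haux
        have hce : List.Chain' (fun a b => a + 2 ≤ b) e := by
          have := hchain.tail
          rw [ht] at this
          exact (List.isChain_append.1 this).2.1
        obtain ⟨S, hS⟩ := exists_finset e (fun x hx => (hee x hx).1) hce
        refine ⟨m+1, S, ?_, ?_⟩
        · intro s hs
          have h2s : 2*s ∈ e := by rw [hS]; exact mem_evs.2 ⟨s, hs, rfl⟩
          have := (hee _ h2s).2
          omega
        · rw [encList, ← hS]
          simp [odds, ht]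
  obtain ⟨r, S, hrs, hl⟩ := key
  have hsum' : n = r^2 + 2 * S.sum id := by rw [← hsum, hl, encList_sum]
  have hlen' : q = r + S.card := by rw [← hlen, hl, encList_length]
  refine ⟨r, S, ?_, ?_, hsum', hlen', hl⟩
  · rcases Nat.eq_zero_or_pos r with rfl | hr
    · omega
    · have : r ≤ r^2 := Nat.le_self_pow (by norm_num) r
      omega
  · intro s hs
    refine ⟨hrs s hs, ?_⟩
    have h2s : 2*s ∈ l := by
      rw [hl, encList]
      exact List.mem_append_right _ (mem_evs.2 ⟨s, hs, rfl⟩)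
    have hle : 2*s ≤ l.sum := List.single_le_sum (by intro x _; omega) _ h2s
    omega

/-! ### the indexing finset -/

def Tset (n q : ℕ) : Finset ((_ : ℕ) × Finset ℕ) :=
  (Finset.range (n+1)).sigma fun r =>
    (Finset.Icc (r+1) n).powerset.filter fun S => n = r^2 + 2 * S.sum id ∧ q = r + S.card

lemma set_eq (n q : ℕ) :
    {l : List ℕ | IsLamPartition 2 l ∧ l.sum = n ∧ l.length = q ∧ lamIndex 2 l = 0} =
      ↑((Tset n q).image fun p => encList p.1 p.2) := by
  ext l
  simp only [Set.mem_setOf_eq, Finset.coe_image, Set.mem_image, Finset.mem_coe]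
  constructor
  · rintro ⟨hp, hsum, hlen, hidx⟩
    obtain ⟨r, S, hr, hS, h1, h2, h3⟩ := decode hp hsum hlen hidx
    refine ⟨⟨r, S⟩, ?_, h3.symm⟩
    simp only [Tset, Finset.mem_sigma, Finset.mem_range, Finset.mem_filter,
      Finset.mem_powerset]
    refine ⟨by omega, ?_, h1, h2⟩
    intro s hs
    have := hS s hs
    simp only [Finset.mem_Icc]
    omega
  · rintro ⟨⟨r, S⟩, hmem, rfl⟩
    simp only [Tset, Finset.mem_sigma, Finset.mem_range, Finset.mem_filter,
      Finset.mem_powerset] at hmem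
    obtain ⟨hr, hsub, h1, h2⟩ := hmem
    have hS : ∀ s ∈ S, r+1 ≤ s := by
      intro s hs
      have := hsub hs
      simp only [Finset.mem_Icc] at this
      omega
    refine ⟨encList_partition hS, ?_, ?_, encList_index r S⟩
    · show (encList r S).sum = n
      rw [encList_sum]; omega
    · show (encList r S).length = q
      rw [encList_length]; omega

lemma card_eq (n q : ℕ) :
    ({l : List ℕ | IsLamPartition 2 l ∧ l.sum = n ∧ l.length = q ∧ lamIndex 2 l = 0}.ncard : ℤ) =
      ∑ r ∈ Finset.range (n+1),
        (((Finset.Icc (r+1) n).powerset.filter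
          fun S => n = r^2 + 2 * S.sum id ∧ q = r + S.card).card : ℤ) := by
  rw [set_eq, Set.ncard_coe_finset, Finset.card_image_of_injOn, Tset, Finset.card_sigma]
  · push_cast
    rfl
  · intro p _ p' _ h
    obtain ⟨h1, h2⟩ := encList_inj h
    exact Sigma.ext h1 (heq_of_eq h2)

section Alg

open PowerSeries Polynomial Finset


abbrev R2 := Polynomial ℤ

noncomputable def Fct (s : ℕ) : PowerSeries R2 :=
  1 + PowerSeries.C (R := R2) Polynomial.X * (PowerSeries.X : PowerSeries R2) ^ (2 * s)

lemma const_Fct {j : ℕ} (hj : 1 ≤ j) : PowerSeries.constantCoeff (R := R2) (Fct j) = 1 := by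
  simp [Fct, zero_pow (by omega : 2 * j ≠ 0)]

lemma const_prod_Fct {r : ℕ} : PowerSeries.constantCoeff (R := R2) (∏ j ∈ Icc 1 r, Fct j) = 1 := by
  rw [map_prod]
  exact Finset.prod_eq_one fun j hj => const_Fct (mem_Icc.1 hj).1

lemma prod_split {r n : ℕ} (h : r ≤ n) :
    (∏ s ∈ Icc 1 n, Fct s) = (∏ j ∈ Icc 1 r, Fct j) * ∏ s ∈ Icc (r+1) n, Fct s := by
  have e1 : Icc 1 n = Ioc 0 n := Finset.Icc_add_one_left_eq_Ioc 0 n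
  have e2 : Icc 1 r = Ioc 0 r := Finset.Icc_add_one_left_eq_Ioc 0 r
  have e3 : Icc (r+1) n = Ioc r n := Finset.Icc_add_one_left_eq_Ioc r n
  rw [e1, e2, e3]
  exact (Finset.prod_Ioc_consecutive _ (Nat.zero_le r) h).symm

lemma expand_prod (a b : ℕ) :
    (∏ s ∈ Icc a b, Fct s) =
      ∑ t ∈ (Icc a b).powerset,
        PowerSeries.C (R := R2) (Polynomial.X ^ t.card) * PowerSeries.X ^ (2 * t.sum id) := by
  have : ∀ s, Fct s = PowerSeries.C (R := R2) Polynomial.X * PowerSeries.X ^ (2*s) + 1 := by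
    intro s; rw [Fct, add_comm]
  simp_rw [this]
  rw [Finset.prod_add]
  refine Finset.sum_congr rfl ?_
  intro t _
  have : (2 * t.sum id) = ∑ i ∈ t, 2 * i := by rw [Finset.mul_sum]; rfl
  rw [Finset.prod_const_one, mul_one, Finset.prod_mul_distrib, Finset.prod_const,
    Finset.prod_pow_eq_pow_sum, ← map_pow, this]

lemma coeff_term (n q r c m : ℕ) :
    Polynomial.coeff (PowerSeries.coeff (R := R2) n
      (PowerSeries.C (R := R2) (Polynomial.X ^ r) * PowerSeries.X ^ (r^2) *
        (PowerSeries.C (R := R2) (Polynomial.X ^ c) * PowerSeries.X ^ m))) q =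
      if n = r^2 + m ∧ q = r + c then 1 else 0 := by
  rw [mul_mul_mul_comm, ← map_mul, ← pow_add, ← pow_add, PowerSeries.coeff_C_mul,
    PowerSeries.coeff_X_pow, mul_ite, mul_one, mul_zero, apply_ite (Polynomial.coeff · q),
    Polynomial.coeff_zero, Polynomial.coeff_X_pow, ← ite_and]

lemma series_eq (n : ℕ) :
    ((∏ s ∈ Finset.Icc 1 n, Fct s) *
      (1 + ∑ r ∈ Finset.Icc 1 n,
        PowerSeries.C (R := R2) (Polynomial.X ^ r) * PowerSeries.X ^ (r ^ 2) *
          PowerSeries.invOfUnit (∏ j ∈ Finset.Icc 1 r, Fct j) 1)) =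
    ∑ r ∈ Finset.range (n+1),
      PowerSeries.C (R := R2) (Polynomial.X ^ r) * PowerSeries.X ^ (r ^ 2) *
        ∏ s ∈ Finset.Icc (r+1) n, Fct s := by
  have hterm : ∀ r ∈ Finset.Icc 1 n,
      (∏ s ∈ Finset.Icc 1 n, Fct s) *
        (PowerSeries.C (R := R2) (Polynomial.X ^ r) * PowerSeries.X ^ (r ^ 2) *
          PowerSeries.invOfUnit (∏ j ∈ Finset.Icc 1 r, Fct j) 1) =
      PowerSeries.C (R := R2) (Polynomial.X ^ r) * PowerSeries.X ^ (r ^ 2) *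
        ∏ s ∈ Finset.Icc (r+1) n, Fct s := by
    intro r hr
    rw [Finset.mem_Icc] at hr
    have hA : (∏ j ∈ Finset.Icc 1 r, Fct j) *
        PowerSeries.invOfUnit (∏ j ∈ Finset.Icc 1 r, Fct j) 1 = 1 :=
      PowerSeries.mul_invOfUnit _ 1 (by rw [const_prod_Fct]; rfl)
    calc (∏ s ∈ Finset.Icc 1 n, Fct s) *
          (PowerSeries.C (R := R2) (Polynomial.X ^ r) * PowerSeries.X ^ (r ^ 2) *
            PowerSeries.invOfUnit (∏ j ∈ Finset.Icc 1 r, Fct j) 1)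
        = ((∏ j ∈ Finset.Icc 1 r, Fct j) *
            PowerSeries.invOfUnit (∏ j ∈ Finset.Icc 1 r, Fct j) 1) *
          (PowerSeries.C (R := R2) (Polynomial.X ^ r) * PowerSeries.X ^ (r ^ 2) *
            ∏ s ∈ Finset.Icc (r+1) n, Fct s) := by
          rw [prod_split hr.2]; ring
      _ = _ := by rw [hA, one_mul]
  rw [mul_add, mul_one, Finset.mul_sum, Finset.sum_congr rfl hterm]
  have hzero : (∏ s ∈ Finset.Icc 1 n, Fct s) =
      PowerSeries.C (R := R2) (Polynomial.X ^ 0) * PowerSeries.X ^ (0 ^ 2) *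
        ∏ s ∈ Finset.Icc (0+1) n, Fct s := by
    simp
  rw [hzero]
  have hins : Finset.range (n+1) = insert 0 (Finset.Icc 1 n) := by
    have e1 : Finset.Icc 1 n = Finset.Ioc 0 n := Finset.Icc_add_one_left_eq_Ioc 0 n
    rw [e1, Finset.Ioc_insert_left (Nat.zero_le n), Finset.range_eq_Ico, Finset.Ico_add_one_right_eq_Icc]
  rw [hins, Finset.sum_insert (by simp)]

lemma rhs_eq (n q : ℕ) :
    (PowerSeries.coeff (R := R2) n
      ((∏ s ∈ Finset.Icc 1 n, Fct s) *
        (1 + ∑ r ∈ Finset.Icc 1 n,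
          PowerSeries.C (R := R2) (Polynomial.X ^ r) * PowerSeries.X ^ (r ^ 2) *
            PowerSeries.invOfUnit (∏ j ∈ Finset.Icc 1 r, Fct j) 1))).coeff q =
    ∑ r ∈ Finset.range (n+1),
      (((Finset.Icc (r+1) n).powerset.filter
        fun S => n = r^2 + 2 * S.sum id ∧ q = r + S.card).card : ℤ) := by
  rw [series_eq, map_sum, Polynomial.finset_sum_coeff]
  refine Finset.sum_congr rfl ?_
  intro r _
  rw [expand_prod, Finset.mul_sum, map_sum, Polynomial.finset_sum_coeff]
  rw [Finset.sum_congr rfl (fun t _ => coeff_term n q r t.card (2 * t.sum id))]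
  rw [Finset.sum_boole]

end Alg

/-- the number of 2-partitions of `n` with `q` parts and index 0 equals
the coefficient of `t^q x^n` in
`∏_{s≥1}(1+tx^{2s})·(1 + Σ_{r≥1} t^r x^{r²}/((1+tx²)⋯(1+tx^{2r})))`, stated over
`Polynomial ℤ` (`t` is `Polynomial.X`); factors and terms that cannot contribute to the
coefficient of `x^n` are omitted. -/
theorem stmt_9 (n q : ℕ) :
    ({l : List ℕ | IsLamPartition 2 l ∧ l.sum = n ∧ l.length = q ∧
        lamIndex 2 l = 0}.ncard : ℤ) =
      (PowerSeries.coeff (R := Polynomial ℤ) n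
        ((∏ s ∈ Finset.Icc 1 n,
            (1 + PowerSeries.C (R := Polynomial ℤ) Polynomial.X *
              (PowerSeries.X : PowerSeries (Polynomial ℤ)) ^ (2 * s))) *
          (1 + ∑ r ∈ Finset.Icc 1 n,
            PowerSeries.C (R := Polynomial ℤ) (Polynomial.X ^ r) * PowerSeries.X ^ (r ^ 2) *
              PowerSeries.invOfUnit
                (∏ j ∈ Finset.Icc 1 r,
                  (1 + PowerSeries.C (R := Polynomial ℤ) Polynomial.X *
                    PowerSeries.X ^ (2 * j))) 1))).coeff q := by
  rw [card_eq n q, ← rhs_eq n q]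
  rfl
end

section
/- A 3-partition of index 0 with q parts is exactly one of the two dense partitions (1, 4, 7, ..., 1+3(q−1)) or (2, 5, 8, ..., 2+3(q−1)); consequently, the degrees of 3-partitions of index 0 of length q are exactly the pentagonal numbers (3q²−q)/2 and (3q²+q)/2. -/
lemma aux_ge : ∀ (t : List ℕ) (a : ℕ), List.Chain' (fun x y => x + 3 ≤ y) (a :: t) →
    ∀ x ∈ blockStartsAux 3 a t, a + 4 ≤ x := by
  intro t
  induction t with
  | nil => intro a _ x hx; simp [blockStartsAux] at hx
  | cons b t ih =>
    intro a hc x hx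
    unfold List.Chain' at hc
    rw [List.isChain_cons_cons] at hc
    simp only [blockStartsAux, List.mem_append] at hx
    rcases hx with hx | hx
    · split at hx <;> simp_all; omega
    · have := ih b hc.2 x hx; omega

lemma fun_shift (a : ℕ) : ((fun i => a + 3 * (i + 1)) ∘ Nat.succ) = fun i => (a + 3) + 3 * (i + 1) := by
  funext i; simp [Nat.succ_eq_add_one]; ring

lemma aux_nil_iff : ∀ (t : List ℕ) (a : ℕ), List.Chain' (fun x y => x + 3 ≤ y) (a :: t) →
    (blockStartsAux 3 a t = [] ↔ t = (List.range t.length).map (fun i => a + 3 * (i + 1))) := by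
  intro t
  induction t with
  | nil => intro a _; simp [blockStartsAux]
  | cons b t ih =>
    intro a hc
    unfold List.Chain' at hc
    rw [List.isChain_cons_cons] at hc
    simp only [blockStartsAux]
    rw [List.length_cons, List.range_succ_eq_map, List.map_cons, List.map_map, fun_shift]
    constructor
    · intro h
      rw [List.append_eq_nil_iff] at h
      have hb : b = a + 3 := by
        by_cases hlt : a + 3 < b
        · rw [if_pos hlt] at h; simp at h
        · omega
      subst hb
      have ht := (ih (a + 3) hc.2).1 h.2
      rw [← ht]
    · intro h
      injection h with h1 h2
      have hb : b = a + 3 := by omega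
      subst hb
      rw [List.append_eq_nil_iff]
      exact ⟨by simp, (ih _ hc.2).2 h2⟩

lemma map_cons (q c : ℕ) (hq : 1 ≤ q) :
    (List.range q).map (fun i => c + 3 * i)
      = c :: (List.range (q - 1)).map (fun i => c + 3 * (i + 1)) := by
  obtain ⟨k, rfl⟩ : ∃ k, q = k + 1 := ⟨q - 1, by omega⟩
  rw [List.range_succ_eq_map, List.map_cons, List.map_map]
  simp only [Nat.add_sub_cancel, mul_zero, add_zero]
  simp [Function.comp_def, Nat.succ_eq_add_one]


lemma chain_map (q c : ℕ) :
    List.Chain' (fun a b => a + 3 ≤ b) ((List.range q).map (fun i => c + 3 * i)) := by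
  unfold List.Chain'
  rw [List.isChain_map]
  refine List.Pairwise.isChain ?_
  refine (List.pairwise_lt_range (n := q)).imp ?_
  intro a b hab
  omega

lemma part_map (q c : ℕ) (hc : 1 ≤ c) :
    IsLamPartition 3 ((List.range q).map (fun i => c + 3 * i)) := by
  refine ⟨chain_map q c, ?_⟩
  intro i hi
  simp only [List.mem_map] at hi
  obtain ⟨j, _, rfl⟩ := hi
  omega

lemma index_map (q c : ℕ) (hq : 1 ≤ q) (hc : c ≤ 2) :
    lamIndex 3 ((List.range q).map (fun i => c + 3 * i)) = 0 := by
  have hchain := chain_map q c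
  rw [map_cons q c hq] at hchain ⊢
  have haux : blockStartsAux 3 c ((List.range (q-1)).map (fun i => c + 3 * (i + 1))) = [] := by
    rw [aux_nil_iff _ _ hchain]
    simp
  unfold lamIndex leadingParts blockStarts
  simp [haux]
  omega

lemma sum_map : ∀ (c q : ℕ), ((List.range q).map (fun i => c + 3 * i)).sum
    = c * q + 3 * (q * (q - 1) / 2) := by
  intro c q
  induction q with
  | zero => simp
  | succ k ih =>
    rw [List.range_succ, List.map_append, List.sum_append, ih]
    simp only [List.map_cons, List.map_nil, List.sum_cons, List.sum_nil]
    have hA : k * (k - 1) % 2 = 0 := by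
      cases k with
      | zero => simp
      | succ n =>
        have h := Nat.even_mul_succ_self n
        simp only [Nat.succ_sub_one]
        rw [mul_comm]
        exact Nat.even_iff.mp h
    have hB : (k + 1) * k = k * (k - 1) + 2 * k := by
      cases k with
      | zero => simp
      | succ n => simp only [Nat.succ_sub_one]; ring
    have hC : c * (k + 1) = c * k + c := by ring
    simp only [Nat.add_sub_cancel]
    omega

lemma qq_facts (q : ℕ) : q * (q - 1) % 2 = 0 ∧ q * (q - 1) + q = q * q := by
  constructor
  · cases q with
    | zero => simp
    | succ n =>
      have h := Nat.even_mul_succ_self n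
      simp only [Nat.succ_sub_one]
      rw [mul_comm]
      exact Nat.even_iff.mp h
  · cases q with
    | zero => simp
    | succ n => simp only [Nat.succ_sub_one]; ring

lemma sum1 (q : ℕ) : ((List.range q).map (fun i => 1 + 3 * i)).sum = (3 * q ^ 2 - q) / 2 := by
  rw [sum_map]
  obtain ⟨h1, h2⟩ := qq_facts q
  have hsq : q ^ 2 = q * q := sq q
  rw [hsq]
  omega

lemma sum2 (q : ℕ) : ((List.range q).map (fun i => 2 + 3 * i)).sum = (3 * q ^ 2 + q) / 2 := by
  rw [sum_map]
  obtain ⟨h1, h2⟩ := qq_facts q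
  have hsq : q ^ 2 = q * q := sq q
  rw [hsq]
  omega

/-- the 3-partitions of index 0 with `q` parts are exactly
`(1,4,…,1+3(q−1))` and `(2,5,…,2+3(q−1))`; consequently their degrees are exactly the
pentagonal numbers `(3q²−q)/2` and `(3q²+q)/2`. -/
theorem stmt_10 (q : ℕ) (hq : 1 ≤ q) :
    (∀ l : List ℕ, (IsLamPartition 3 l ∧ l.length = q ∧ lamIndex 3 l = 0) ↔
      (l = (List.range q).map (fun i => 1 + 3 * i) ∨
        l = (List.range q).map (fun i => 2 + 3 * i))) ∧
    {n : ℕ | ∃ l : List ℕ, IsLamPartition 3 l ∧ l.length = q ∧ lamIndex 3 l = 0 ∧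
        l.sum = n} =
      {(3 * q ^ 2 - q) / 2, (3 * q ^ 2 + q) / 2} := by
  have key : ∀ l : List ℕ, (IsLamPartition 3 l ∧ l.length = q ∧ lamIndex 3 l = 0) ↔
      (l = (List.range q).map (fun i => 1 + 3 * i) ∨
        l = (List.range q).map (fun i => 2 + 3 * i)) := by
    intro l
    constructor
    · rintro ⟨⟨hch, hpos⟩, hlen, hidx⟩
      cases l with
      | nil => simp at hlen; omega
      | cons a t =>
        have ha1 : 1 ≤ a := hpos a (by simp)
        unfold lamIndex leadingParts at hidx
        rw [if_neg (by norm_num)] at hidx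
        simp only [blockStarts] at hidx
        rw [List.length_eq_zero_iff, List.filter_eq_nil_iff] at hidx
        have ha2 : a ≤ 2 := by
          have := hidx a (by simp)
          simp at this
          omega
        have haux : blockStartsAux 3 a t = [] := by
          cases h : blockStartsAux 3 a t with
          | nil => rfl
          | cons x s =>
            have hx : x ∈ blockStartsAux 3 a t := by rw [h]; simp
            have h4 := aux_ge t a hch x hx
            have h5 := hidx x (by simp [h])
            simp at h5
            omega
        have ht := (aux_nil_iff t a hch).1 haux
        have hlt : t.length = q - 1 := by simp at hlen; omega
        rcases (by omega : a = 1 ∨ a = 2) with rfl | rfl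
        · left; rw [map_cons q 1 hq, ← hlt, ← ht]
        · right; rw [map_cons q 2 hq, ← hlt, ← ht]
    · rintro (rfl | rfl)
      · exact ⟨part_map q 1 le_rfl, by simp, index_map q 1 hq (by norm_num)⟩
      · exact ⟨part_map q 2 one_le_two, by simp, index_map q 2 hq (by norm_num)⟩
  refine ⟨key, ?_⟩
  ext n
  simp only [Set.mem_setOf_eq, Set.mem_insert_iff, Set.mem_singleton_iff]
  constructor
  · rintro ⟨l, hp, hlen, hidx, rfl⟩
    rcases (key l).1 ⟨hp, hlen, hidx⟩ with rfl | rfl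
    · left; exact sum1 q
    · right; exact sum2 q
  · rintro (rfl | rfl)
    · exact ⟨_, part_map q 1 le_rfl, by simp, index_map q 1 hq (by norm_num), sum1 q⟩
    · exact ⟨_, part_map q 2 one_le_two, by simp, index_map q 2 hq (by norm_num), sum2 q⟩
end

section
/- The map S sending a partition I = (x_1,...,x_r | y_1,...,y_r) in Frobenius coordinates with m parts and degree n to the marked 3-partition [(x_1+y_1, ..., x_r+y_r); (x_{a_1}+y_{a_1}, ..., x_{a_s}+y_{a_s})], where a_1 < ... < a_s are the indices with y_{a_k} − y_{a_k−1} = 2 (with y_0 = −1), is a bijection from the set of partitions of n with m distinct parts onto the set of marked 3-partitions of n of length m. -/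
/-- The length of the `j`-th row (0-indexed from the top) of the Ferrers diagram of the
partition given by the strictly increasing list `l` of its parts. -/
def rowLen (l : List ℕ) (j : ℕ) : ℕ := l.reverse.getD j 0

/-- The length of the `c`-th column (0-indexed) of the Ferrers diagram of `l`,
i.e. the conjugate partition. -/
def colLen (l : List ℕ) (c : ℕ) : ℕ :=
  ((List.range l.length).filter (fun j => decide (c < rowLen l j))).length

/-- The number of cells on the main diagonal of the Ferrers diagram of `l`. -/
def durfee (l : List ℕ) : ℕ :=
  ((List.range l.length).filter (fun j => decide (j < rowLen l j))).length

/-- `frX l i` (for `1 ≤ i ≤ durfee l`): the number of cells in the row of the `i`-th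
diagonal cell (numbered from bottom to top) lying to the right of the diagonal cell,
including the diagonal cell itself. -/
def frX (l : List ℕ) (i : ℕ) : ℕ := rowLen l (durfee l - i) - (durfee l - i)

/-- `frY l i` (for `1 ≤ i ≤ durfee l`): the number of cells in the column of the `i`-th
diagonal cell (numbered from bottom to top) lying strictly below the diagonal cell. -/
def frY (l : List ℕ) (i : ℕ) : ℕ := colLen l (durfee l - i) - (durfee l - i) - 1

/-- The map `S` of §2: a partition with Frobenius symbol `(x₁,…,x_r | y₁,…,y_r)` is
sent to the marked 3-partition whose parts are `x_i + y_i` (`i = 1,…,r`), a part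
`x_a + y_a` being marked iff `y_a − y_{a−1} = 2` (with the convention `y₀ = −1`). -/
def mapS (l : List ℕ) : List ℕ × Finset ℕ :=
  ((List.range (durfee l)).map (fun k => frX l (k + 1) + frY l (k + 1)),
   ((Finset.Icc 1 (durfee l)).filter (fun a =>
      (a = 1 ∧ frY l 1 = 1) ∨ (2 ≤ a ∧ frY l a = frY l (a - 1) + 2))).image
     (fun a => frX l a + frY l a))


namespace S13


lemma filter_length_eq_card (N : ℕ) (P : ℕ → Prop) [DecidablePred P] :
    ((List.range N).filter (fun j => decide (P j))).length
      = ((Finset.range N).filter P).card := by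
  simp [Finset.filter, Finset.range, Multiset.range, Multiset.filter, Finset.card]
  rfl

lemma chain'_getD {R : ℕ → ℕ → Prop} {l : List ℕ} :
    l.Chain' R ↔ ∀ k, k + 1 < l.length → R (l.getD k 0) (l.getD (k+1) 0) := by
  rw [show l.Chain' R ↔ l.IsChain R from Iff.rfl, List.isChain_iff_getElem]
  constructor
  · intro h k hk
    have h1 : k < l.length := by omega
    rw [List.getD_eq_getElem?_getD, List.getElem?_eq_getElem h1,
        List.getD_eq_getElem?_getD, List.getElem?_eq_getElem hk]
    exact h k (by omega)
  · intro h i hi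
    have := h i (by omega)
    rwa [List.getD_eq_getElem?_getD, List.getElem?_eq_getElem (show i < l.length by omega),
        List.getD_eq_getElem?_getD, List.getElem?_eq_getElem (show i+1 < l.length by omega)] at this

lemma getD_eq_get {l : List ℕ} {k : ℕ} (h : k < l.length) : l.getD k 0 = l[k] := by
  rw [List.getD_eq_getElem?_getD, List.getElem?_eq_getElem h]; rfl

lemma list_eq_of_getD {l1 l2 : List ℕ} (hlen : l1.length = l2.length)
    (h : ∀ k, k < l1.length → l1.getD k 0 = l2.getD k 0) : l1 = l2 := by
  apply List.ext_getElem hlen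
  intro k h1 h2
  have := h k h1
  rwa [getD_eq_get h1, getD_eq_get h2] at this

lemma mem_iff_getD {l : List ℕ} {v : ℕ} : v ∈ l ↔ ∃ k, k < l.length ∧ l.getD k 0 = v := by
  constructor
  · intro hv
    obtain ⟨k, hk, hkv⟩ := List.getElem_of_mem hv
    exact ⟨k, hk, by rw [getD_eq_get hk, hkv]⟩
  · rintro ⟨k, hk, hkv⟩
    rw [← hkv, getD_eq_get hk]; exact List.getElem_mem _

lemma getD_map_range {n : ℕ} {f : ℕ → ℕ} {k : ℕ} (h : k < n) :
    ((List.range n).map f).getD k 0 = f k := by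
  rw [List.getD_eq_getElem?_getD, List.getElem?_map]
  simp [List.getElem?_range h]

lemma getD_reverse {l : List ℕ} {j : ℕ} (h : j < l.length) :
    l.reverse.getD j 0 = l.getD (l.length - 1 - j) 0 := by
  rw [List.getD_eq_getElem?_getD, List.getD_eq_getElem?_getD, List.getElem?_reverse h]

lemma down_closed_filter {m : ℕ} {P : ℕ → Prop} [DecidablePred P]
    (h : ∀ j, j + 1 < m → P (j+1) → P j) :
    (Finset.range m).filter P = Finset.range (((Finset.range m).filter P).card) := by
  set S := (Finset.range m).filter P with hS
  have hsub : ∀ j ∈ S, ∀ i, i ≤ j → i ∈ S := by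
    intro j hj i hij
    obtain ⟨d, hd⟩ : ∃ d, i = j - d := ⟨j - i, by omega⟩
    subst hd
    clear hij
    induction d with
    | zero => simpa using hj
    | succ d ih =>
      rcases Nat.eq_zero_or_pos (j - d) with h0 | h0
      · have : j - (d+1) = j - d := by omega
        rw [this]; exact ih
      · have hmem := ih
        rw [hS, Finset.mem_filter, Finset.mem_range] at hmem
        have heq : j - (d+1) + 1 = j - d := by omega
        have := h (j - (d+1)) (by omega) (by rw [heq]; exact hmem.2)
        rw [hS, Finset.mem_filter, Finset.mem_range]
        exact ⟨by omega, this⟩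
  ext j
  simp only [Finset.mem_range]
  constructor
  · intro hj
    have hsubset : Finset.range (j+1) ⊆ S := by
      intro i hi
      rw [Finset.mem_range] at hi
      exact hsub j hj i (by omega)
    have := Finset.card_le_card hsubset
    simp at this
    omega
  · intro hj
    by_contra hjS
    have : S ⊆ Finset.range j := by
      intro i hi
      rw [Finset.mem_range]
      by_contra hgt
      push_neg at hgt
      exact hjS (hsub i hi j hgt)
    have := Finset.card_le_card this
    simp at this
    omega


lemma le_card_filter_iff {N t c : ℕ} {w : ℕ → ℕ}
    (hm : ∀ k1 k2, k1 ≤ k2 → k2 < N → w k1 ≤ w k2) (ht : 1 ≤ t) :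
    t ≤ ((Finset.range N).filter (fun k => c ≤ w k)).card ↔ t ≤ N ∧ c ≤ w (N - t) := by
  constructor
  · intro h
    have hcard : ((Finset.range N).filter (fun k => c ≤ w k)).card ≤ N := by
      have := Finset.card_le_card (Finset.filter_subset (fun k => c ≤ w k) (Finset.range N))
      simpa using this
    have htN : t ≤ N := le_trans h hcard
    refine ⟨htN, ?_⟩
    by_contra hc
    push_neg at hc
    have hsub : (Finset.range N).filter (fun k => c ≤ w k) ⊆ Finset.Ico (N - t + 1) N := by
      intro k hk
      rw [Finset.mem_filter, Finset.mem_range] at hk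
      rw [Finset.mem_Ico]
      refine ⟨?_, hk.1⟩
      by_contra hlt
      push_neg at hlt
      have := hm k (N - t) (by omega) (by omega)
      omega
    have := Finset.card_le_card hsub
    rw [Nat.card_Ico] at this
    omega
  · rintro ⟨htN, hc⟩
    have hsub : Finset.Ico (N - t) N ⊆ (Finset.range N).filter (fun k => c ≤ w k) := by
      intro k hk
      rw [Finset.mem_Ico] at hk
      rw [Finset.mem_filter, Finset.mem_range]
      exact ⟨hk.2, le_trans hc (hm (N - t) k hk.1 hk.2)⟩
    have := Finset.card_le_card hsub
    rw [Nat.card_Ico] at this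
    omega

/-- counting `k < N` with `t + k ≤ v` : equals `min (v - t + 1) N`-ish; we use the form needed. -/
lemma card_filter_range_le {N v : ℕ} :
    ((Finset.range N).filter (fun k => k ≤ v)).card = min (v + 1) N := by
  have : (Finset.range N).filter (fun k => k ≤ v) = Finset.range (min (v+1) N) := by
    ext k
    simp only [Finset.mem_filter, Finset.mem_range, lt_min_iff]
    omega
  rw [this, Finset.card_range]

lemma card_filter_range_add_le {N t v : ℕ} :
    ((Finset.range N).filter (fun s => t + s ≤ v)).card = min (v + 1 - t) N := by
  have : (Finset.range N).filter (fun s => t + s ≤ v) = Finset.range (min (v + 1 - t) N) := by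
    ext k
    simp only [Finset.mem_filter, Finset.mem_range, lt_min_iff]
    omega
  rw [this, Finset.card_range]

lemma card_filter_range_ge {N v : ℕ} :
    ((Finset.range N).filter (fun k => v ≤ k)).card = N - v := by
  have : (Finset.range N).filter (fun k => v ≤ k) = Finset.Ico v N := by
    ext k
    simp only [Finset.mem_filter, Finset.mem_range, Finset.mem_Ico]
    omega
  rw [this, Nat.card_Ico]

/-- Frobenius condition on coordinate lists. -/
def FrobCond (xs ys : List ℕ) : Prop :=
  xs ≠ [] ∧ ys.length = xs.length ∧
  (∀ k, k + 1 < xs.length → xs.getD k 0 + 2 ≤ xs.getD (k+1) 0) ∧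
  (∀ k, k + 1 < xs.length → ys.getD k 0 + 1 ≤ ys.getD (k+1) 0 ∧ ys.getD (k+1) 0 ≤ ys.getD k 0 + 2) ∧
  1 ≤ xs.getD 0 0 ∧ ys.getD 0 0 ≤ 1 ∧ (xs.getD 0 0 = 1 → ys.getD 0 0 = 0)

def urOf (xs ys : List ℕ) : ℕ := ys.getD (xs.length - 1) 0 - (xs.length - 1)

def Hcnt (xs ys : List ℕ) (t : ℕ) : ℕ :=
  ((Finset.range xs.length).filter (fun i => t + i ≤ ys.getD i 0)).card

def phi (xs ys : List ℕ) : List ℕ :=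
  (List.range (urOf xs ys)).map (fun s => Hcnt xs ys (urOf xs ys - s))
  ++ (List.range xs.length).map (fun i => xs.getD i 0 + (xs.length - 1 - i))

def psi (xs ys : List ℕ) : List ℕ × Finset ℕ :=
  ((List.range xs.length).map (fun k => xs.getD k 0 + ys.getD k 0),
   ((Finset.Icc 1 xs.length).filter (fun a =>
      (a = 1 ∧ ys.getD 0 0 = 1) ∨ (2 ≤ a ∧ ys.getD (a-1) 0 = ys.getD (a-2) 0 + 2))).image
     (fun a => xs.getD (a-1) 0 + ys.getD (a-1) 0))

section FC

variable {xs ys : List ℕ}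

lemma FC.rpos (h : FrobCond xs ys) : 1 ≤ xs.length := by
  have h1 := h.1
  cases xs with
  | nil => exact absurd rfl h1
  | cons a t => simp

lemma FC.x_mono (h : FrobCond xs ys) : ∀ k1 k2, k1 ≤ k2 → k2 < xs.length →
    xs.getD k1 0 + 2 * (k2 - k1) ≤ xs.getD k2 0 := by
  intro k1 k2 hle hlt
  obtain ⟨d, rfl⟩ : ∃ d, k2 = k1 + d := ⟨k2 - k1, by omega⟩
  induction d with
  | zero => simp
  | succ d ih =>
    have h1 := ih (by omega) (by omega)
    have h2 := h.2.2.1 (k1 + d) (by omega)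
    rw [show k1 + (d + 1) = k1 + d + 1 from rfl]
    omega

lemma FC.y_mono (h : FrobCond xs ys) : ∀ k1 k2, k1 ≤ k2 → k2 < xs.length →
    ys.getD k1 0 + (k2 - k1) ≤ ys.getD k2 0 ∧ ys.getD k2 0 ≤ ys.getD k1 0 + 2 * (k2 - k1) := by
  intro k1 k2 hle hlt
  obtain ⟨d, rfl⟩ : ∃ d, k2 = k1 + d := ⟨k2 - k1, by omega⟩
  induction d with
  | zero => simp
  | succ d ih =>
    have h1 := ih (by omega) (by omega)
    have h2 := h.2.2.2.1 (k1 + d) (by omega)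
    rw [show k1 + (d + 1) = k1 + d + 1 from rfl]
    omega

lemma FC.xlb (h : FrobCond xs ys) : ∀ k, k < xs.length → 2 * k + 1 ≤ xs.getD k 0 := by
  intro k hk
  have := FC.x_mono h 0 k (by omega) hk
  have := h.2.2.2.2.1
  omega

lemma FC.ylb (h : FrobCond xs ys) : ∀ k, k < xs.length → k ≤ ys.getD k 0 := by
  intro k hk
  have := FC.y_mono h 0 k (by omega) hk
  omega

lemma FC.yub (h : FrobCond xs ys) : ∀ k, k < xs.length → ys.getD k 0 ≤ 2 * k + 1 := by
  intro k hk
  have := FC.y_mono h 0 k (by omega) hk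
  have := h.2.2.2.2.2.1
  omega

/-- `u` monotone with steps `≤ 1`. -/
lemma FC.u_mono (h : FrobCond xs ys) : ∀ k1 k2, k1 ≤ k2 → k2 < xs.length →
    ys.getD k1 0 - k1 ≤ ys.getD k2 0 - k2 ∧
    ys.getD k2 0 - k2 ≤ (ys.getD k1 0 - k1) + (k2 - k1) := by
  intro k1 k2 hle hlt
  have h1 := FC.y_mono h k1 k2 hle hlt
  have h2 := FC.ylb h k1 (by omega)
  have h3 := FC.ylb h k2 hlt
  omega

lemma FC.ur_eq : urOf xs ys = ys.getD (xs.length - 1) 0 - (xs.length - 1) := rfl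

lemma FC.u_le_ur (h : FrobCond xs ys) : ∀ k, k < xs.length → ys.getD k 0 - k ≤ urOf xs ys := by
  intro k hk
  have := FC.u_mono h k (xs.length - 1) (by omega) (by have := FC.rpos h; omega)
  rw [FC.ur_eq]
  omega

end FC


section HC

variable {xs ys : List ℕ}

lemma Hcnt_le (xs ys : List ℕ) (t : ℕ) : Hcnt xs ys t ≤ xs.length := by
  have := Finset.card_le_card (Finset.filter_subset (fun i => t + i ≤ ys.getD i 0) (Finset.range xs.length))
  simpa [Hcnt] using this

lemma Hcnt_ge_iff (h : FrobCond xs ys) {t s : ℕ} (ht : 1 ≤ t) (hs : 1 ≤ s) :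
    s ≤ Hcnt xs ys t ↔ s ≤ xs.length ∧ t + (xs.length - s) ≤ ys.getD (xs.length - s) 0 := by
  have hcong : (Finset.range xs.length).filter (fun i => t + i ≤ ys.getD i 0)
      = (Finset.range xs.length).filter (fun i => t ≤ ys.getD i 0 - i) := by
    apply Finset.filter_congr
    intro i _
    constructor <;> intro hi <;> omega
  rw [Hcnt, hcong,
    le_card_filter_iff (w := fun k => ys.getD k 0 - k)
      (fun k1 k2 h12 h2 => (FC.u_mono h k1 k2 h12 h2).1) hs]
  constructor
  · rintro ⟨h1, h2⟩
    exact ⟨h1, by omega⟩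
  · rintro ⟨h1, h2⟩
    exact ⟨h1, by omega⟩

lemma Hcnt_pos (h : FrobCond xs ys) {t : ℕ} (ht : 1 ≤ t) (htu : t ≤ urOf xs ys) :
    1 ≤ Hcnt xs ys t := by
  rw [Hcnt_ge_iff h ht le_rfl]
  have hr := FC.rpos h
  have := FC.ylb h (xs.length - 1) (by omega)
  rw [FC.ur_eq] at htu
  exact ⟨hr, by omega⟩

lemma Hcnt_strict (h : FrobCond xs ys) {t : ℕ} (ht : 1 ≤ t) (htu : t + 1 ≤ urOf xs ys) :
    Hcnt xs ys (t + 1) < Hcnt xs ys t := by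
  rcases Nat.eq_zero_or_pos (Hcnt xs ys (t + 1)) with h0 | h0
  · rw [h0]
    exact Hcnt_pos h ht (by omega)
  · set s := Hcnt xs ys (t + 1) with hsdef
    have hiff := (Hcnt_ge_iff h (t := t + 1) (s := s) (by omega) h0).mp le_rfl
    have hsr : s < xs.length := by
      rcases Nat.lt_or_ge s xs.length with h1 | h1
      · exact h1
      · exfalso
        have hseq : xs.length - s = 0 := by omega
        rw [hseq] at hiff
        have := h.2.2.2.2.2.1
        omega
    have hstep := FC.u_mono h (xs.length - s - 1) (xs.length - s) (by omega) (by omega)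
    have hylb := FC.ylb h (xs.length - s - 1) (by omega)
    have : s + 1 ≤ Hcnt xs ys t := by
      rw [Hcnt_ge_iff h ht (by omega)]
      refine ⟨by omega, ?_⟩
      have hidx : xs.length - (s + 1) = xs.length - s - 1 := by omega
      rw [hidx]
      omega
    omega

end HC


section PHI

variable {xs ys : List ℕ}

lemma phi_length : (phi xs ys).length = urOf xs ys + xs.length := by
  simp [phi]

lemma phi_getD_small {s : ℕ} (hs : s < urOf xs ys) :
    (phi xs ys).getD s 0 = Hcnt xs ys (urOf xs ys - s) := by
  rw [phi, List.getD_append _ _ _ _ (by simpa using hs), getD_map_range hs]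

lemma phi_getD_big {i : ℕ} (hi : i < xs.length) :
    (phi xs ys).getD (urOf xs ys + i) 0 = xs.getD i 0 + (xs.length - 1 - i) := by
  rw [phi, List.getD_append_right _ _ _ _ (by simp), ]
  simp only [List.length_map, List.length_range]
  rw [show urOf xs ys + i - urOf xs ys = i by omega, getD_map_range hi]

lemma H1_lt (h : FrobCond xs ys) : Hcnt xs ys 1 < xs.getD 0 0 + (xs.length - 1) := by
  rcases Nat.lt_or_ge (Hcnt xs ys 1) xs.length with h1 | h1
  · have := h.2.2.2.2.1
    omega
  · -- Hcnt 1 = r, so u 0 ≥ 1, so ys 0 = 1, so xs 0 ≥ 2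
    have hr := FC.rpos h
    have h2 : xs.length ≤ Hcnt xs ys 1 := h1
    rw [Hcnt_ge_iff h le_rfl (by omega)] at h2
    rw [Nat.sub_self] at h2
    have hy0 : ys.getD 0 0 ≤ 1 := h.2.2.2.2.2.1
    have hy01 : ys.getD 0 0 = 1 := by omega
    have hx2 : 2 ≤ xs.getD 0 0 := by
      have hx1 := h.2.2.2.2.1
      rcases Nat.lt_or_ge 1 (xs.getD 0 0) with h3 | h3
      · omega
      · have := h.2.2.2.2.2.2 (by omega)
        omega
    have := Hcnt_le xs ys 1
    omega

lemma phi_distinct (h : FrobCond xs ys) : IsDistinctPartition (phi xs ys) := by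
  have hr := FC.rpos h
  constructor
  · rw [chain'_getD]
    intro k hk
    rw [phi_length] at hk
    rcases Nat.lt_or_ge (k+1) (urOf xs ys) with h1 | h1
    · -- both small
      rw [phi_getD_small (by omega), phi_getD_small h1]
      have : urOf xs ys - k = (urOf xs ys - (k+1)) + 1 := by omega
      rw [this]
      exact Hcnt_strict h (by omega) (by omega)
    · rcases Nat.lt_or_ge k (urOf xs ys) with h2 | h2
      · -- junction : k = ur - 1, k+1 = ur
        have hk1 : k + 1 = urOf xs ys := by omega
        have : urOf xs ys - k = 1 := by omega
        rw [phi_getD_small h2, this,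
          show k + 1 = urOf xs ys + 0 by omega, phi_getD_big (by omega)]
        have := H1_lt h
        omega
      · -- both big
        obtain ⟨i, rfl⟩ : ∃ i, k = urOf xs ys + i := ⟨k - urOf xs ys, by omega⟩
        have hi1 : i + 1 < xs.length := by omega
        rw [phi_getD_big (by omega), show urOf xs ys + i + 1 = urOf xs ys + (i+1) by omega,
          phi_getD_big hi1]
        have := h.2.2.1 i hi1
        omega
  · intro v hv
    rw [mem_iff_getD] at hv
    obtain ⟨k, hk, rfl⟩ := hv
    rw [phi_length] at hk
    rcases Nat.lt_or_ge k (urOf xs ys) with h1 | h1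
    · rw [phi_getD_small h1]
      exact Hcnt_pos h (by omega) (by omega)
    · obtain ⟨i, rfl⟩ : ∃ i, k = urOf xs ys + i := ⟨k - urOf xs ys, by omega⟩
      rw [phi_getD_big (by omega)]
      have := FC.xlb h i (by omega)
      omega

lemma phi_sum (h : FrobCond xs ys) :
    (phi xs ys).sum = ∑ i ∈ Finset.range xs.length, (xs.getD i 0 + ys.getD i 0) := by
  have hr := FC.rpos h
  rw [phi, List.sum_append]
  have hsmall : ((List.range (urOf xs ys)).map (fun s => Hcnt xs ys (urOf xs ys - s))).sum
      = ∑ i ∈ Finset.range xs.length, (ys.getD i 0 - i) := by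
    show ∑ s ∈ Finset.range (urOf xs ys), Hcnt xs ys (urOf xs ys - s) = _
    have step1 : ∑ s ∈ Finset.range (urOf xs ys), Hcnt xs ys (urOf xs ys - s)
        = ∑ t ∈ Finset.range (urOf xs ys), Hcnt xs ys (t + 1) := by
      rw [← Finset.sum_range_reflect]
      apply Finset.sum_congr rfl
      intro s hs
      rw [Finset.mem_range] at hs
      congr 1
      omega
    rw [step1]
    have step2 : ∀ t ∈ Finset.range (urOf xs ys), Hcnt xs ys (t + 1)
        = ∑ i ∈ Finset.range xs.length, if (t + 1) + i ≤ ys.getD i 0 then 1 else 0 := by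
      intro t _
      rw [Hcnt, Finset.card_filter]
    rw [Finset.sum_congr rfl step2, Finset.sum_comm]
    apply Finset.sum_congr rfl
    intro i hi
    rw [Finset.mem_range] at hi
    have : ∑ t ∈ Finset.range (urOf xs ys), (if (t + 1) + i ≤ ys.getD i 0 then 1 else 0)
        = ((Finset.range (urOf xs ys)).filter (fun t => (1 + i) + t ≤ ys.getD i 0)).card := by
      rw [Finset.card_filter]
      apply Finset.sum_congr rfl
      intro t _
      congr 1
      · simp only [eq_iff_iff]
        omega
    rw [this, card_filter_range_add_le]
    have h1 := FC.ylb h i hi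
    have h2 := FC.u_le_ur h i hi
    omega
  rw [hsmall]
  have hbig : ((List.range xs.length).map (fun i => xs.getD i 0 + (xs.length - 1 - i))).sum
      = ∑ i ∈ Finset.range xs.length, (xs.getD i 0 + (xs.length - 1 - i)) := rfl
  rw [hbig]
  have hrefl : ∑ i ∈ Finset.range xs.length, (xs.length - 1 - i)
      = ∑ i ∈ Finset.range xs.length, i := Finset.sum_range_reflect (fun i => i) xs.length
  rw [Finset.sum_add_distrib, Finset.sum_add_distrib, hrefl]
  have key : ∑ i ∈ Finset.range xs.length, (ys.getD i 0 - i) + ∑ i ∈ Finset.range xs.length, i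
      = ∑ i ∈ Finset.range xs.length, ys.getD i 0 := by
    rw [← Finset.sum_add_distrib]
    apply Finset.sum_congr rfl
    intro i hi
    rw [Finset.mem_range] at hi
    have := FC.ylb h i hi
    omega
  omega

end PHI


section GEO

variable {xs ys : List ℕ}

lemma phi_rowLen_big (h : FrobCond xs ys) {j : ℕ} (hj : j < xs.length) :
    rowLen (phi xs ys) j = xs.getD (xs.length - 1 - j) 0 + j := by
  have hr := FC.rpos h
  have hjm : j < (phi xs ys).length := by rw [phi_length]; omega
  rw [rowLen, getD_reverse hjm, phi_length,
    show urOf xs ys + xs.length - 1 - j = urOf xs ys + (xs.length - 1 - j) by omega,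
    phi_getD_big (by omega), show xs.length - 1 - (xs.length - 1 - j) = j by omega]

lemma phi_rowLen_small (h : FrobCond xs ys) {j : ℕ} (hj1 : xs.length ≤ j)
    (hj2 : j < urOf xs ys + xs.length) :
    rowLen (phi xs ys) j = Hcnt xs ys (j + 1 - xs.length) := by
  have hjm : j < (phi xs ys).length := by rw [phi_length]; omega
  rw [rowLen, getD_reverse hjm, phi_length,
    phi_getD_small (show urOf xs ys + xs.length - 1 - j < urOf xs ys by omega),
    show urOf xs ys - (urOf xs ys + xs.length - 1 - j) = j + 1 - xs.length by omega]

lemma durfee_phi (h : FrobCond xs ys) : durfee (phi xs ys) = xs.length := by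
  have hr := FC.rpos h
  rw [durfee, filter_length_eq_card, phi_length]
  have : (Finset.range (urOf xs ys + xs.length)).filter (fun j => j < rowLen (phi xs ys) j)
      = Finset.range xs.length := by
    ext j
    simp only [Finset.mem_filter, Finset.mem_range]
    constructor
    · rintro ⟨hj, hlt⟩
      by_contra hge
      push_neg at hge
      rw [phi_rowLen_small h hge hj] at hlt
      have := Hcnt_le xs ys (j + 1 - xs.length)
      omega
    · intro hj
      refine ⟨by omega, ?_⟩
      rw [phi_rowLen_big h hj]
      have := FC.xlb h (xs.length - 1 - j) (by omega)
      omega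
  rw [this, Finset.card_range]

lemma frX_phi (h : FrobCond xs ys) {i : ℕ} (h1 : 1 ≤ i) (h2 : i ≤ xs.length) :
    frX (phi xs ys) i = xs.getD (i - 1) 0 := by
  rw [frX, durfee_phi h, phi_rowLen_big h (show xs.length - i < xs.length by omega),
    show xs.length - 1 - (xs.length - i) = i - 1 by omega]
  omega

lemma colLen_phi (h : FrobCond xs ys) {c : ℕ} (hc : c < xs.length) :
    colLen (phi xs ys) c
      = xs.length + (ys.getD (xs.length - 1 - c) 0 - (xs.length - 1 - c)) := by
  have hr := FC.rpos h
  rw [colLen, filter_length_eq_card, phi_length]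
  have hunion : Finset.range (urOf xs ys + xs.length)
      = Finset.range xs.length ∪ Finset.Ico xs.length (urOf xs ys + xs.length) := by
    ext j
    simp only [Finset.mem_range, Finset.mem_union, Finset.mem_Ico]
    omega
  have hdisj : Disjoint ((Finset.range xs.length).filter (fun j => c < rowLen (phi xs ys) j))
      ((Finset.Ico xs.length (urOf xs ys + xs.length)).filter (fun j => c < rowLen (phi xs ys) j)) := by
    rw [Finset.disjoint_left]
    intro a ha hb
    rw [Finset.mem_filter, Finset.mem_range] at ha
    rw [Finset.mem_filter, Finset.mem_Ico] at hb
    omega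
  rw [hunion, Finset.filter_union, Finset.card_union_of_disjoint hdisj]
  have hpart1 : (Finset.range xs.length).filter (fun j => c < rowLen (phi xs ys) j)
      = Finset.range xs.length := by
    apply Finset.filter_true_of_mem
    intro j hj
    rw [Finset.mem_range] at hj
    rw [phi_rowLen_big h hj]
    have := FC.xlb h (xs.length - 1 - j) (by omega)
    omega
  have himg : Finset.Ico xs.length (urOf xs ys + xs.length)
      = (Finset.range (urOf xs ys)).image (fun t => t + xs.length) := by
    ext j
    simp only [Finset.mem_Ico, Finset.mem_image, Finset.mem_range]
    constructor
    · intro hj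
      exact ⟨j - xs.length, by omega, by omega⟩
    · rintro ⟨t, ht, rfl⟩
      omega
  have hinj : Function.Injective (fun t => t + xs.length) := fun a b hab => by
    simpa using hab
  have hpart2 : ((Finset.Ico xs.length (urOf xs ys + xs.length)).filter
        (fun j => c < rowLen (phi xs ys) j)).card
      = ys.getD (xs.length - 1 - c) 0 - (xs.length - 1 - c) := by
    rw [himg, Finset.filter_image, Finset.card_image_of_injective _ hinj]
    have hcong : (Finset.range (urOf xs ys)).filter (fun t => c < rowLen (phi xs ys) (t + xs.length))
        = (Finset.range (urOf xs ys)).filter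
            (fun t => 1 + t ≤ ys.getD (xs.length - 1 - c) 0 - (xs.length - 1 - c)) := by
      apply Finset.filter_congr
      intro t ht
      rw [Finset.mem_range] at ht
      rw [phi_rowLen_small h (by omega) (by omega),
        show t + xs.length + 1 - xs.length = t + 1 by omega]
      have hiff := Hcnt_ge_iff h (t := t + 1) (s := c + 1) (by omega) (by omega)
      have hylb := FC.ylb h (xs.length - (c+1)) (by omega)
      have hidx : xs.length - (c + 1) = xs.length - 1 - c := by omega
      rw [hidx] at hiff hylb
      constructor
      · intro hlt
        have := hiff.mp (by omega)
        omega
      · intro hle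
        have : c + 1 ≤ Hcnt xs ys (t+1) := hiff.mpr ⟨by omega, by omega⟩
        omega
    rw [hcong, card_filter_range_add_le]
    have := FC.u_le_ur h (xs.length - 1 - c) (by omega)
    omega
  rw [hpart1, hpart2, Finset.card_range]

lemma frY_phi (h : FrobCond xs ys) {i : ℕ} (h1 : 1 ≤ i) (h2 : i ≤ xs.length) :
    frY (phi xs ys) i = ys.getD (i - 1) 0 := by
  rw [frY, durfee_phi h, colLen_phi h (show xs.length - i < xs.length by omega),
    show xs.length - 1 - (xs.length - i) = i - 1 by omega]
  have := FC.ylb h (i - 1) (by omega)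
  omega

lemma mapS_phi (h : FrobCond xs ys) : mapS (phi xs ys) = psi xs ys := by
  have hr := FC.rpos h
  rw [mapS, psi, durfee_phi h]
  simp only [Prod.mk.injEq]
  constructor
  · apply List.map_congr_left
    intro k hk
    rw [List.mem_range] at hk
    rw [frX_phi h (by omega) (by omega), frY_phi h (by omega) (by omega)]
    norm_num
  · have hfilter : (Finset.Icc 1 xs.length).filter
        (fun a => a = 1 ∧ frY (phi xs ys) 1 = 1 ∨
          2 ≤ a ∧ frY (phi xs ys) a = frY (phi xs ys) (a - 1) + 2)
        = (Finset.Icc 1 xs.length).filter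
        (fun a => a = 1 ∧ ys.getD 0 0 = 1 ∨ 2 ≤ a ∧ ys.getD (a - 1) 0 = ys.getD (a - 2) 0 + 2) := by
      apply Finset.filter_congr
      intro a ha
      rw [Finset.mem_Icc] at ha
      rw [frY_phi h (i := 1) le_rfl hr, show (1:ℕ) - 1 = 0 from rfl]
      rcases Nat.lt_or_ge a 2 with h2 | h2
      · have ha1 : a = 1 := by omega
        subst ha1
        norm_num
      · rw [frY_phi h (i := a) (by omega) (by omega),
          frY_phi h (i := a - 1) (by omega) (by omega), show a - 1 - 1 = a - 2 by omega]
    rw [hfilter]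
    apply Finset.image_congr
    intro a ha
    simp only [Finset.coe_filter, Set.mem_setOf_eq, Finset.mem_Icc] at ha
    show frX (phi xs ys) a + frY (phi xs ys) a = xs.getD (a - 1) 0 + ys.getD (a - 1) 0
    rw [frX_phi h (by omega) (by omega), frY_phi h (by omega) (by omega)]

end GEO


section DEC

def xsOf (l : List ℕ) : List ℕ :=
  (List.range (durfee l)).map
    (fun i => l.getD (l.length - durfee l + i) 0 - (durfee l - 1 - i))

def ysOf (l : List ℕ) : List ℕ :=
  (List.range (durfee l)).map
    (fun i => i + ((Finset.range (l.length - durfee l)).filter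
      (fun k => durfee l - i ≤ l.getD k 0)).card)

variable {l : List ℕ}

lemma DP.mono (hl : IsDistinctPartition l) : ∀ k1 k2, k1 ≤ k2 → k2 < l.length →
    l.getD k1 0 + (k2 - k1) ≤ l.getD k2 0 := by
  intro k1 k2 hle hlt
  obtain ⟨d, rfl⟩ : ∃ d, k2 = k1 + d := ⟨k2 - k1, by omega⟩
  induction d with
  | zero => simp
  | succ d ih =>
    have h1 := ih (by omega) (by omega)
    have h2 := chain'_getD.mp hl.1 (k1 + d) (by omega)
    rw [show k1 + (d + 1) = k1 + d + 1 from rfl]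
    omega

lemma DP.lb (hl : IsDistinctPartition l) : ∀ k, k < l.length → k + 1 ≤ l.getD k 0 := by
  intro k hk
  have h1 := DP.mono hl 0 k (by omega) hk
  have h2 : 0 < l.getD 0 0 := by
    apply hl.2
    rw [mem_iff_getD]
    exact ⟨0, by omega, rfl⟩
  omega

lemma DP.inj (hl : IsDistinctPartition l) : ∀ k1 k2, k1 < l.length → k2 < l.length →
    l.getD k1 0 = l.getD k2 0 → k1 = k2 := by
  intro k1 k2 h1 h2 heq
  rcases Nat.lt_trichotomy k1 k2 with h | h | h
  · have := DP.mono hl k1 k2 (by omega) h2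
    omega
  · exact h
  · have := DP.mono hl k2 k1 (by omega) h1
    omega

/-- Characterization of the Durfee square size. -/
lemma durfee_char (hl : IsDistinctPartition l) :
    durfee l ≤ l.length ∧
    (∀ j, j < durfee l → j < l.getD (l.length - 1 - j) 0) ∧
    (∀ j, durfee l ≤ j → j < l.length → l.getD (l.length - 1 - j) 0 ≤ j) := by
  have hcongr : (Finset.range l.length).filter (fun j => j < rowLen l j)
      = (Finset.range l.length).filter (fun j => j < l.getD (l.length - 1 - j) 0) := by
    apply Finset.filter_congr
    intro j hj
    rw [Finset.mem_range] at hj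
    rw [rowLen, getD_reverse hj]
  have hdc : ∀ j, j + 1 < l.length → (j + 1 < l.getD (l.length - 1 - (j+1)) 0) →
      j < l.getD (l.length - 1 - j) 0 := by
    intro j hj h1
    have := DP.mono hl (l.length - 1 - (j+1)) (l.length - 1 - j) (by omega) (by omega)
    omega
  have hd : durfee l = ((Finset.range l.length).filter
      (fun j => j < l.getD (l.length - 1 - j) 0)).card := by
    rw [durfee, filter_length_eq_card, hcongr]
  have hiff : ∀ j, j ∈ (Finset.range l.length).filter
      (fun j => j < l.getD (l.length - 1 - j) 0) ↔ j < durfee l := by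
    intro j
    rw [hd, ← Finset.mem_range (n := ((Finset.range l.length).filter
      (fun j => j < l.getD (l.length - 1 - j) 0)).card)]
    rw [← down_closed_filter hdc]
  refine ⟨?_, ?_, ?_⟩
  · rw [hd]
    have := Finset.card_le_card (Finset.filter_subset
      (fun j => j < l.getD (l.length - 1 - j) 0) (Finset.range l.length))
    simpa using this
  · intro j hj
    have := (hiff j).mpr hj
    rw [Finset.mem_filter] at this
    exact this.2
  · intro j h1 h2
    by_contra hc
    push_neg at hc
    have : j ∈ (Finset.range l.length).filter
        (fun j => j < l.getD (l.length - 1 - j) 0) := by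
      rw [Finset.mem_filter, Finset.mem_range]
      exact ⟨h2, hc⟩
    rw [hiff j] at this
    omega

lemma durfee_pos (hl : IsDistinctPartition l) (hne : 1 ≤ l.length) : 1 ≤ durfee l := by
  obtain ⟨h1, h2, h3⟩ := durfee_char hl
  by_contra hc
  push_neg at hc
  have h4 := h3 0 (by omega) (by omega)
  rw [Nat.sub_zero] at h4
  have := DP.lb hl (l.length - 1) (by omega)
  omega

lemma small_le (hl : IsDistinctPartition l) :
    ∀ k, k < l.length - durfee l → l.getD k 0 ≤ durfee l := by
  intro k hk
  obtain ⟨h1, h2, h3⟩ := durfee_char hl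
  have hr : durfee l < l.length := by omega
  have hb := h3 (durfee l) le_rfl hr
  have := DP.mono hl k (l.length - 1 - durfee l) (by omega) (by omega)
  omega

lemma big_ge (hl : IsDistinctPartition l) :
    ∀ i, i < durfee l → durfee l - i ≤ l.getD (l.length - durfee l + i) 0 := by
  intro i hi
  obtain ⟨h1, h2, h3⟩ := durfee_char hl
  have := h2 (durfee l - 1 - i) (by omega)
  rw [show l.length - 1 - (durfee l - 1 - i) = l.length - durfee l + i by omega] at this
  omega

lemma frobCond_of (hl : IsDistinctPartition l) (hne : 1 ≤ l.length) :
    FrobCond (xsOf l) (ysOf l) := by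
  have hr1 := durfee_pos hl hne
  obtain ⟨hrm, hbig, hsm⟩ := durfee_char hl
  have hxlen : (xsOf l).length = durfee l := by simp [xsOf]
  have hylen : (ysOf l).length = durfee l := by simp [ysOf]
  have hxget : ∀ i, i < durfee l → (xsOf l).getD i 0
      = l.getD (l.length - durfee l + i) 0 - (durfee l - 1 - i) := by
    intro i hi
    rw [xsOf, getD_map_range hi]
  have hyget : ∀ i, i < durfee l → (ysOf l).getD i 0
      = i + ((Finset.range (l.length - durfee l)).filter
          (fun k => durfee l - i ≤ l.getD k 0)).card := by
    intro i hi
    rw [ysOf, getD_map_range hi]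
  have hcmono : ∀ i, i + 1 < durfee l →
      ((Finset.range (l.length - durfee l)).filter
        (fun k => durfee l - i ≤ l.getD k 0)).card
      ≤ ((Finset.range (l.length - durfee l)).filter
        (fun k => durfee l - (i+1) ≤ l.getD k 0)).card := by
    intro i hi
    apply Finset.card_le_card
    intro k hk
    simp only [Finset.mem_filter, Finset.mem_range] at *
    omega
  have hcstep : ∀ i, i + 1 < durfee l →
      ((Finset.range (l.length - durfee l)).filter
        (fun k => durfee l - (i+1) ≤ l.getD k 0)).card
      ≤ ((Finset.range (l.length - durfee l)).filter
        (fun k => durfee l - i ≤ l.getD k 0)).card + 1 := by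
    intro i hi
    have hsub : (Finset.range (l.length - durfee l)).filter
        (fun k => durfee l - (i+1) ≤ l.getD k 0)
      ⊆ ((Finset.range (l.length - durfee l)).filter
        (fun k => durfee l - i ≤ l.getD k 0))
        ∪ ((Finset.range (l.length - durfee l)).filter
        (fun k => l.getD k 0 = durfee l - (i+1))) := by
      intro k hk
      simp only [Finset.mem_filter, Finset.mem_range, Finset.mem_union] at *
      omega
    have hone : ((Finset.range (l.length - durfee l)).filter
        (fun k => l.getD k 0 = durfee l - (i+1))).card ≤ 1 := by
      apply Finset.card_le_one.mpr
      intro a ha b hb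
      rw [Finset.mem_filter, Finset.mem_range] at ha hb
      exact DP.inj hl a b (by omega) (by omega) (by omega)
    calc ((Finset.range (l.length - durfee l)).filter
        (fun k => durfee l - (i+1) ≤ l.getD k 0)).card
        ≤ _ := Finset.card_le_card hsub
      _ ≤ _ + _ := Finset.card_union_le _ _
      _ ≤ _ + 1 := by omega
  have hy0 : (ysOf l).getD 0 0 ≤ 1 := by
    rw [hyget 0 (by omega)]
    have : ((Finset.range (l.length - durfee l)).filter
        (fun k => durfee l - 0 ≤ l.getD k 0)).card ≤ 1 := by
      apply Finset.card_le_one.mpr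
      intro a ha b hb
      rw [Finset.mem_filter, Finset.mem_range] at ha hb
      have h1 := small_le hl a ha.1
      have h2 := small_le hl b hb.1
      exact DP.inj hl a b (by omega) (by omega) (by omega)
    omega
  refine ⟨?_, by omega, ?_, ?_, ?_, hy0, ?_⟩
  · intro hnil
    rw [← List.length_eq_zero_iff] at hnil
    omega
  · -- x gaps
    intro k hk
    rw [hxlen] at hk
    rw [hxget k (by omega), hxget (k+1) (by omega)]
    have h1 := big_ge hl k (by omega)
    have h2 := DP.mono hl (l.length - durfee l + k) (l.length - durfee l + (k+1))
      (by omega) (by omega)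
    rw [show l.length - durfee l + (k + 1) = l.length - durfee l + k + 1 from rfl] at *
    omega
  · -- y gaps
    intro k hk
    rw [hxlen] at hk
    rw [hyget k (by omega), hyget (k+1) (by omega)]
    have h1 := hcmono k hk
    have h2 := hcstep k hk
    omega
  · -- x0 ≥ 1
    rw [hxget 0 (by omega)]
    have := big_ge hl 0 (by omega)
    omega
  · -- x0 = 1 → y0 = 0
    intro hx1
    rw [hxget 0 (by omega)] at hx1
    have hb := big_ge hl 0 (by omega)
    have heq : l.getD (l.length - durfee l + 0) 0 = durfee l := by omega
    rw [hyget 0 (by omega)]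
    have : (Finset.range (l.length - durfee l)).filter
        (fun k => durfee l - 0 ≤ l.getD k 0) = ∅ := by
      apply Finset.filter_false_of_mem
      intro k hk
      rw [Finset.mem_range] at hk
      have := DP.mono hl k (l.length - durfee l + 0) (by omega) (by omega)
      omega
    rw [this]
    simp

end DEC


section RECON

variable {l : List ℕ}

lemma ur_of_eq (hl : IsDistinctPartition l) (hne : 1 ≤ l.length) :
    urOf (xsOf l) (ysOf l) = l.length - durfee l := by
  have hr1 := durfee_pos hl hne
  have hxlen : (xsOf l).length = durfee l := by simp [xsOf]
  rw [urOf, hxlen, ysOf, getD_map_range (show durfee l - 1 < durfee l by omega)]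
  have : (Finset.range (l.length - durfee l)).filter
      (fun k => durfee l - (durfee l - 1) ≤ l.getD k 0)
      = Finset.range (l.length - durfee l) := by
    apply Finset.filter_true_of_mem
    intro k hk
    rw [Finset.mem_range] at hk
    have := DP.lb hl k (by omega)
    omega
  rw [this, Finset.card_range]
  omega

lemma phi_eq (hl : IsDistinctPartition l) (hne : 1 ≤ l.length) :
    phi (xsOf l) (ysOf l) = l := by
  have hr1 := durfee_pos hl hne
  obtain ⟨hrm, hbig, hsm⟩ := durfee_char hl
  have hxlen : (xsOf l).length = durfee l := by simp [xsOf]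
  have hur := ur_of_eq hl hne
  apply list_eq_of_getD
  · rw [phi_length, hur, hxlen]
    omega
  · intro k hk
    rw [phi_length, hur, hxlen] at hk
    rcases Nat.lt_or_ge k (l.length - durfee l) with hks | hkb
    · -- small part
      rw [phi_getD_small (by rw [hur]; omega), hur]
      set t := l.length - durfee l - k with htdef
      have ht1 : 1 ≤ t := by omega
      have hv : l.getD (l.length - durfee l - t) 0 ≤ durfee l :=
        small_le hl _ (by omega)
      have hkey : (Finset.range (xsOf l).length).filter
          (fun i => t + i ≤ (ysOf l).getD i 0)
          = (Finset.range (xsOf l).length).filter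
          (fun i => durfee l - l.getD (l.length - durfee l - t) 0 ≤ i) := by
        apply Finset.filter_congr
        intro i hi
        rw [hxlen] at hi
        rw [Finset.mem_range] at hi
        rw [ysOf, getD_map_range hi]
        have hiff := le_card_filter_iff (N := l.length - durfee l)
          (t := t) (c := durfee l - i) (w := fun k => l.getD k 0)
          (fun k1 k2 h12 h2 => by
            show l.getD k1 0 ≤ l.getD k2 0
            have := DP.mono hl k1 k2 h12 (by omega)
            omega) ht1
        constructor
        · intro hle
          have := hiff.mp (by omega)
          omega
        · intro hle
          have : t ≤ ((Finset.range (l.length - durfee l)).filter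
              (fun k => durfee l - i ≤ l.getD k 0)).card := hiff.mpr ⟨by omega, by omega⟩
          omega
      rw [show l.length - durfee l - t = k by omega] at hv hkey
      rw [Hcnt, hkey, hxlen, card_filter_range_ge]
      omega
    · -- big part
      obtain ⟨i, rfl⟩ : ∃ i, k = (l.length - durfee l) + i := ⟨k - (l.length - durfee l), by omega⟩
      have hi : i < durfee l := by omega
      have hgoal := phi_getD_big (xs := xsOf l) (ys := ysOf l) (i := i)
        (by rw [hxlen]; omega)
      have hxv : (xsOf l).getD i 0
          = l.getD (l.length - durfee l + i) 0 - (durfee l - 1 - i) := by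
        rw [xsOf, getD_map_range hi]
      rw [hur, hxlen, hxv] at hgoal
      rw [hgoal]
      have := big_ge hl i hi
      omega

end RECON


section PSI

lemma mem_blockStartsAux {v p : ℕ} {t : List ℕ} :
    v ∈ blockStartsAux 3 p t ↔
      ∃ k, k < t.length ∧ v = t.getD k 0 ∧
        (if k = 0 then p else t.getD (k-1) 0) + 3 < v := by
  induction t generalizing p with
  | nil => simp [blockStartsAux]
  | cons a tl ih =>
    rw [blockStartsAux]
    constructor
    · intro hv
      rw [List.mem_append] at hv
      rcases hv with hv | hv
      · refine ⟨0, by simp, ?_, ?_⟩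
        · by_cases hpa : p + 3 < a <;> simp [hpa] at hv <;> simp [hv]
        · by_cases hpa : p + 3 < a <;> simp [hpa] at hv
          simp [hv]
          omega
      · obtain ⟨k, hk, hkv, hlt⟩ := ih.mp hv
        refine ⟨k + 1, by simpa using hk, by simpa using hkv, ?_⟩
        rcases Nat.eq_zero_or_pos k with rfl | hk0
        · simpa using hlt
        · have : ¬(k + 1 = 0) := by omega
          simp only [this, if_neg, if_false]
          rw [if_neg (by omega : ¬ k = 0)] at hlt
          have : (a :: tl).getD (k + 1 - 1) 0 = tl.getD (k - 1) 0 := by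
            rw [show k + 1 - 1 = k by omega]
            cases k with
            | zero => omega
            | succ k' => simp [List.getD_cons_succ]
          rw [this]
          exact hlt
    · rintro ⟨k, hk, hkv, hlt⟩
      rw [List.mem_append]
      cases k with
      | zero =>
        left
        simp only [List.getD_cons_zero] at hkv
        subst hkv
        have hpv : p + 3 < v := by simpa using hlt
        simp [hpv]
      | succ k' =>
        right
        apply ih.mpr
        refine ⟨k', by simpa using hk, by simpa using hkv, ?_⟩
        rw [if_neg (by omega : ¬ k' + 1 = 0)] at hlt
        rcases Nat.eq_zero_or_pos k' with rfl | hk0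
        · simpa using hlt
        · rw [if_neg (by omega : ¬ k' = 0)]
          have : (a :: tl).getD (k' + 1 - 1) 0 = tl.getD (k' - 1) 0 := by
            rw [show k' + 1 - 1 = k' by omega]
            cases k' with
            | zero => omega
            | succ k'' => simp [List.getD_cons_succ]
          rw [this] at hlt
          exact hlt

lemma mem_blockStarts3 {v : ℕ} {zs : List ℕ} (hne : zs ≠ []) :
    v ∈ blockStarts 3 zs ↔
      ∃ k, k < zs.length ∧ v = zs.getD k 0 ∧
        (k = 0 ∨ zs.getD (k-1) 0 + 3 < v) := by
  cases zs with
  | nil => exact absurd rfl hne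
  | cons a tl =>
    rw [blockStarts]
    constructor
    · intro hv
      rw [List.mem_cons] at hv
      rcases hv with rfl | hv
      · exact ⟨0, by simp, by simp, Or.inl rfl⟩
      · obtain ⟨k, hk, hkv, hlt⟩ := mem_blockStartsAux.mp hv
        refine ⟨k + 1, by simpa using hk, by simpa using hkv, Or.inr ?_⟩
        rcases Nat.eq_zero_or_pos k with rfl | hk0
        · simpa using hlt
        · rw [if_neg (by omega : ¬ k = 0)] at hlt
          have : (a :: tl).getD (k + 1 - 1) 0 = tl.getD (k - 1) 0 := by
            rw [show k + 1 - 1 = k by omega]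
            cases k with
            | zero => omega
            | succ k'' => simp [List.getD_cons_succ]
          rw [this]
          exact hlt
    · rintro ⟨k, hk, hkv, hor⟩
      rw [List.mem_cons]
      cases k with
      | zero =>
        left
        simpa using hkv
      | succ k' =>
        right
        apply mem_blockStartsAux.mpr
        refine ⟨k', by simpa using hk, by simpa using hkv, ?_⟩
        rcases hor with h0 | hlt
        · omega
        · rcases Nat.eq_zero_or_pos k' with rfl | hk0
          · simpa using hlt
          · rw [if_neg (by omega : ¬ k' = 0)]
            have : (a :: tl).getD (k' + 1 - 1) 0 = tl.getD (k' - 1) 0 := by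
              rw [show k' + 1 - 1 = k' by omega]
              cases k' with
              | zero => omega
              | succ k'' => simp [List.getD_cons_succ]
            rw [this] at hlt
            exact hlt

lemma mem_leadingParts3 {v : ℕ} {zs : List ℕ} (hne : zs ≠ []) :
    v ∈ leadingParts 3 zs ↔
      (∃ k, k < zs.length ∧ v = zs.getD k 0 ∧
        (k = 0 ∨ zs.getD (k-1) 0 + 3 < v)) ∧ 2 < v := by
  rw [leadingParts, if_neg (by omega : ¬ (3:ℕ) = 2), List.mem_filter,
    mem_blockStarts3 hne]
  simp

end PSI


section PSI2

variable {xs ys : List ℕ}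

/-- the `a`-condition for marking. -/
def condM (ys : List ℕ) (a : ℕ) : Prop :=
  (a = 1 ∧ ys.getD 0 0 = 1) ∨ (2 ≤ a ∧ ys.getD (a-1) 0 = ys.getD (a-2) 0 + 2)

instance : DecidablePred (condM ys) := fun _ => by unfold condM; infer_instance

lemma psi_snd_def : (psi xs ys).2
    = ((Finset.Icc 1 xs.length).filter (condM ys)).image
        (fun a => xs.getD (a-1) 0 + ys.getD (a-1) 0) := by
  rw [psi]
  congr 1

lemma psi_fst_length : (psi xs ys).1.length = xs.length := by simp [psi]

lemma psi_fst_getD {k : ℕ} (hk : k < xs.length) :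
    (psi xs ys).1.getD k 0 = xs.getD k 0 + ys.getD k 0 := by
  rw [psi, getD_map_range hk]

lemma psi_fst_sum : (psi xs ys).1.sum
    = ∑ i ∈ Finset.range xs.length, (xs.getD i 0 + ys.getD i 0) := rfl

lemma zval_mono (h : FrobCond xs ys) : ∀ a b, a ≤ b → b < xs.length →
    xs.getD a 0 + ys.getD a 0 + 3 * (b - a) ≤ xs.getD b 0 + ys.getD b 0 := by
  intro a b hab hb
  have h1 := FC.x_mono h a b hab hb
  have h2 := FC.y_mono h a b hab hb
  omega

lemma psi_lam (h : FrobCond xs ys) : IsLamPartition 3 (psi xs ys).1 := by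
  constructor
  · rw [chain'_getD]
    intro k hk
    rw [psi_fst_length] at hk
    rw [psi_fst_getD (by omega), psi_fst_getD (by omega)]
    have := zval_mono h k (k+1) (by omega) hk
    omega
  · intro v hv
    rw [mem_iff_getD] at hv
    obtain ⟨k, hk, rfl⟩ := hv
    rw [psi_fst_length] at hk
    rw [psi_fst_getD hk]
    have := FC.xlb h k hk
    omega

lemma psi_fst_ne (h : FrobCond xs ys) : (psi xs ys).1 ≠ [] := by
  have := FC.rpos h
  intro hc
  rw [← List.length_eq_zero_iff, psi_fst_length] at hc
  omega

lemma psi_marked (h : FrobCond xs ys) : IsMarked 3 (psi xs ys) := by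
  have hr := FC.rpos h
  refine ⟨psi_lam h, ?_⟩
  intro v hv
  rw [psi_snd_def, Finset.mem_image] at hv
  obtain ⟨a, ha, rfl⟩ := hv
  rw [Finset.mem_filter, Finset.mem_Icc] at ha
  obtain ⟨⟨ha1, har⟩, hcond⟩ := ha
  rw [mem_leadingParts3 (psi_fst_ne h)]
  have hxa := FC.xlb h (a-1) (by omega)
  have hya := FC.ylb h (a-1) (by omega)
  constructor
  · refine ⟨a - 1, by rw [psi_fst_length]; omega, by rw [psi_fst_getD (by omega)], ?_⟩
    rcases hcond with ⟨rfl, hy1⟩ | ⟨ha2, hjump⟩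
    · exact Or.inl rfl
    · right
      rw [psi_fst_getD (by omega), show a - 1 - 1 = a - 2 by omega]
      have := h.2.2.1 (a - 2) (by omega)
      rw [show a - 2 + 1 = a - 1 by omega] at this
      omega
  · rcases hcond with ⟨rfl, hy1⟩ | ⟨ha2, hjump⟩
    · -- a = 1 : ys 0 = 1 so xs 0 ≥ 2
      simp only [Nat.sub_self] at *
      have : ¬ xs.getD 0 0 = 1 := fun hx => by
        have := h.2.2.2.2.2.2 hx
        omega
      have := h.2.2.2.2.1
      omega
    · omega

/-- number of marks. -/
lemma mark_count (h : FrobCond xs ys) :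
    ((Finset.Icc 1 xs.length).filter (condM ys)).card + xs.length
      = ys.getD (xs.length - 1) 0 + 1 := by
  have hr := FC.rpos h
  have key : ∀ R, 1 ≤ R → R ≤ xs.length →
      ((Finset.Icc 1 R).filter (condM ys)).card + R = ys.getD (R - 1) 0 + 1 := by
    intro R
    induction R with
    | zero => omega
    | succ R ih =>
      intro h1 hR
      rcases Nat.eq_zero_or_pos R with rfl | hR0
      · -- R+1 = 1
        have : Finset.Icc 1 1 = {1} := rfl
        rw [this]
        have hy0 := h.2.2.2.2.2.1
        rw [show (0:ℕ) + 1 - 1 = 0 from rfl]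
        by_cases hc : condM ys 1
        · rw [Finset.filter_singleton, if_pos hc, Finset.card_singleton]
          rcases hc with ⟨-, hy1⟩ | ⟨hc2, -⟩
          · omega
          · omega
        · rw [Finset.filter_singleton, if_neg hc, Finset.card_empty]
          have : ¬ ys.getD 0 0 = 1 := fun hy => hc (Or.inl ⟨rfl, hy⟩)
          omega
      · have hih := ih hR0 (by omega)
        have hicc : Finset.Icc 1 (R + 1) = insert (R + 1) (Finset.Icc 1 R) := by
          ext x
          simp only [Finset.mem_Icc, Finset.mem_insert]
          omega
        rw [hicc, Finset.filter_insert, show R + 1 - 1 = R by omega]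
        have hgap := h.2.2.2.1 (R - 1) (by omega)
        rw [show R - 1 + 1 = R by omega] at hgap
        have hnotmem : R + 1 ∉ (Finset.Icc 1 R).filter (condM ys) := by
          intro hc
          rw [Finset.mem_filter, Finset.mem_Icc] at hc
          omega
        by_cases hc : condM ys (R + 1)
        · rw [if_pos hc, Finset.card_insert_of_notMem hnotmem]
          rcases hc with ⟨he, -⟩ | ⟨-, hjump⟩
          · omega
          · rw [show R + 1 - 1 = R by omega, show R + 1 - 2 = R - 1 by omega] at hjump
            omega
        · rw [if_neg hc]
          have : ¬ (ys.getD (R + 1 - 1) 0 = ys.getD (R + 1 - 2) 0 + 2) :=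
            fun hy => hc (Or.inr ⟨by omega, hy⟩)
          rw [show R + 1 - 1 = R by omega, show R + 1 - 2 = R - 1 by omega] at this
          omega
  exact key xs.length (by omega) le_rfl

lemma zval_injOn (h : FrobCond xs ys) : ∀ a ∈ Finset.Icc 1 xs.length,
    ∀ b ∈ Finset.Icc 1 xs.length,
    xs.getD (a-1) 0 + ys.getD (a-1) 0 = xs.getD (b-1) 0 + ys.getD (b-1) 0 → a = b := by
  intro a ha b hb heq
  rw [Finset.mem_Icc] at ha hb
  rcases Nat.lt_trichotomy a b with hab | hab | hab
  · have := zval_mono h (a-1) (b-1) (by omega) (by omega)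
    omega
  · exact hab
  · have := zval_mono h (b-1) (a-1) (by omega) (by omega)
    omega

lemma psi_snd_card (h : FrobCond xs ys) :
    (psi xs ys).2.card + xs.length = ys.getD (xs.length - 1) 0 + 1 := by
  rw [psi_snd_def, Finset.card_image_of_injOn (fun a ha b hb =>
    zval_injOn h a (Finset.mem_of_mem_filter a ha) b (Finset.mem_of_mem_filter b hb))]
  exact mark_count h

lemma psi_mem_snd (h : FrobCond xs ys) {a : ℕ} (ha : a ∈ Finset.Icc 1 xs.length) :
    xs.getD (a-1) 0 + ys.getD (a-1) 0 ∈ (psi xs ys).2 ↔ condM ys a := by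
  rw [psi_snd_def, Finset.mem_image]
  constructor
  · rintro ⟨b, hb, heq⟩
    have := zval_injOn h b (Finset.mem_of_mem_filter b hb) a ha heq
    subst this
    exact (Finset.mem_filter.mp hb).2
  · intro hc
    exact ⟨a, Finset.mem_filter.mpr ⟨ha, hc⟩, rfl⟩

end PSI2


section INJ

lemma psi_inj {xs1 ys1 xs2 ys2 : List ℕ} (h1 : FrobCond xs1 ys1) (h2 : FrobCond xs2 ys2)
    (heq : psi xs1 ys1 = psi xs2 ys2) : xs1 = xs2 ∧ ys1 = ys2 := by
  have hfst : (psi xs1 ys1).1 = (psi xs2 ys2).1 := by rw [heq]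
  have hsnd : (psi xs1 ys1).2 = (psi xs2 ys2).2 := by rw [heq]
  have hlen : xs1.length = xs2.length := by
    have := congrArg List.length hfst
    rwa [psi_fst_length, psi_fst_length] at this
  have hz : ∀ k, k < xs1.length →
      xs1.getD k 0 + ys1.getD k 0 = xs2.getD k 0 + ys2.getD k 0 := by
    intro k hk
    have hh := congrArg (fun t : List ℕ => t.getD k 0) hfst
    rwa [psi_fst_getD hk, psi_fst_getD (by omega : k < xs2.length)] at hh
  have hcond : ∀ a, 1 ≤ a → a ≤ xs1.length → (condM ys1 a ↔ condM ys2 a) := by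
    intro a hla hra
    have ha1 : a ∈ Finset.Icc 1 xs1.length := Finset.mem_Icc.mpr ⟨hla, hra⟩
    have ha2 : a ∈ Finset.Icc 1 xs2.length := Finset.mem_Icc.mpr ⟨hla, by omega⟩
    rw [← psi_mem_snd h1 ha1, ← psi_mem_snd h2 ha2, hsnd, hz (a-1) (by omega)]
  have hys : ∀ k, k < xs1.length → ys1.getD k 0 = ys2.getD k 0 := by
    intro k
    induction k with
    | zero =>
      intro hk
      have hc := hcond 1 le_rfl (by omega)
      have e1 := h1.2.2.2.2.2.1
      have e2 := h2.2.2.2.2.2.1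
      have hc' : ys1.getD 0 0 = 1 ↔ ys2.getD 0 0 = 1 := by
        constructor
        · intro hy
          rcases hc.mp (Or.inl ⟨rfl, hy⟩) with ⟨-, hy2⟩ | ⟨hge, -⟩
          · exact hy2
          · omega
        · intro hy
          rcases hc.mpr (Or.inl ⟨rfl, hy⟩) with ⟨-, hy2⟩ | ⟨hge, -⟩
          · exact hy2
          · omega
      omega
    | succ k ih =>
      intro hk
      have hihk := ih (by omega)
      have hc := hcond (k + 2) (by omega) (by omega)
      have hg1 := h1.2.2.2.1 k (by omega)
      have hg2 := h2.2.2.2.1 k (by omega)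
      have hc' : ys1.getD (k+1) 0 = ys1.getD k 0 + 2 ↔
          ys2.getD (k+1) 0 = ys2.getD k 0 + 2 := by
        have hidx1 : k + 2 - 1 = k + 1 := by omega
        have hidx2 : k + 2 - 2 = k := by omega
        constructor
        · intro hy
          rcases hc.mp (Or.inr ⟨by omega, by rw [hidx1, hidx2]; exact hy⟩) with
            ⟨he, -⟩ | ⟨-, hy2⟩
          · omega
          · rw [hidx1, hidx2] at hy2
            exact hy2
        · intro hy
          rcases hc.mpr (Or.inr ⟨by omega, by rw [hidx1, hidx2]; exact hy⟩) with
            ⟨he, -⟩ | ⟨-, hy2⟩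
          · omega
          · rw [hidx1, hidx2] at hy2
            exact hy2
      omega
  have hyl1 := h1.2.1
  have hyl2 := h2.2.1
  have hys' : ys1 = ys2 := by
    apply list_eq_of_getD (by omega)
    intro k hk
    exact hys k (by omega)
  refine ⟨?_, hys'⟩
  apply list_eq_of_getD hlen
  intro k hk
  have := hz k hk
  have := hys k hk
  have := FC.xlb h1 k hk
  have := FC.xlb h2 k (by omega)
  omega

end INJ


section SURJ

def yfun (zs : List ℕ) (J : Finset ℕ) : ℕ → ℕ
  | 0 => if zs.getD 0 0 ∈ J then 1 else 0
  | (k+1) => yfun zs J k + 1 + (if zs.getD (k+1) 0 ∈ J then 1 else 0)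

def xsJ (zs : List ℕ) (J : Finset ℕ) : List ℕ :=
  (List.range zs.length).map (fun k => zs.getD k 0 - yfun zs J k)

def ysJ (zs : List ℕ) (J : Finset ℕ) : List ℕ :=
  (List.range zs.length).map (yfun zs J)

variable {zs : List ℕ} {J : Finset ℕ}

lemma Z.mono (hz : IsLamPartition 3 zs) : ∀ a b, a ≤ b → b < zs.length →
    zs.getD a 0 + 3 * (b - a) ≤ zs.getD b 0 := by
  intro a b hab hb
  obtain ⟨d, rfl⟩ : ∃ d, b = a + d := ⟨b - a, by omega⟩
  induction d with
  | zero => simp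
  | succ d ih =>
    have hh := ih (by omega) (by omega)
    have h2 := chain'_getD.mp hz.1 (a + d) (by omega)
    rw [show a + (d + 1) = a + d + 1 from rfl]
    omega

lemma Z.pos (hz : IsLamPartition 3 zs) : ∀ k, k < zs.length → 1 ≤ zs.getD k 0 := by
  intro k hk
  have : zs.getD k 0 ∈ zs := by
    rw [mem_iff_getD]
    exact ⟨k, hk, rfl⟩
  exact hz.2 _ this

lemma Z.inj (hz : IsLamPartition 3 zs) : ∀ a b, a < zs.length → b < zs.length →
    zs.getD a 0 = zs.getD b 0 → a = b := by
  intro a b ha hb heq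
  rcases Nat.lt_trichotomy a b with hd | hd | hd
  · have := Z.mono hz a b (by omega) hb; omega
  · exact hd
  · have := Z.mono hz b a (by omega) ha; omega

lemma Jfact (hp : IsMarked 3 (zs, J)) (hne : zs ≠ []) :
    ∀ k, k < zs.length → zs.getD k 0 ∈ J →
      2 < zs.getD k 0 ∧ (k = 0 ∨ zs.getD (k-1) 0 + 3 < zs.getD k 0) := by
  have hz : IsLamPartition 3 zs := hp.1
  intro k hk hmem
  have := hp.2 _ hmem
  rw [mem_leadingParts3 hne] at this
  obtain ⟨⟨k', hk', hvk', hor⟩, h2v⟩ := this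
  have : k' = k := Z.inj hz k' k hk' hk hvk'.symm
  subst this
  exact ⟨h2v, by rwa [← hvk']⟩

lemma yfun_lb (hp : IsMarked 3 (zs, J)) (hne : zs ≠ []) :
    ∀ k, k < zs.length → yfun zs J k + 1 ≤ zs.getD k 0 := by
  have hz : IsLamPartition 3 zs := hp.1
  intro k
  induction k with
  | zero =>
    intro hk
    rw [yfun]
    by_cases hm : zs.getD 0 0 ∈ J
    · rw [if_pos hm]
      have := (Jfact hp hne 0 hk hm).1
      omega
    · rw [if_neg hm]
      have := Z.pos hz 0 hk
      omega
  | succ k ih =>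
    intro hk
    have hih := ih (by omega)
    have hgap := chain'_getD.mp hz.1 k (by omega)
    rw [yfun]
    by_cases hm : zs.getD (k+1) 0 ∈ J
    · rw [if_pos hm]
      have := (Jfact hp hne (k+1) hk hm).2
      rcases this with h0 | hlt
      · omega
      · rw [show k + 1 - 1 = k by omega] at hlt
        omega
    · rw [if_neg hm]
      omega

lemma frobCond_J (hp : IsMarked 3 (zs, J)) (hne : zs ≠ []) :
    FrobCond (xsJ zs J) (ysJ zs J) := by
  have hz : IsLamPartition 3 zs := hp.1
  have hlen : 1 ≤ zs.length := by
    cases zs with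
    | nil => exact absurd rfl hne
    | cons a t => simp
  have hxlen : (xsJ zs J).length = zs.length := by simp [xsJ]
  have hylen : (ysJ zs J).length = zs.length := by simp [ysJ]
  have hxget : ∀ k, k < zs.length → (xsJ zs J).getD k 0 = zs.getD k 0 - yfun zs J k := by
    intro k hk
    rw [xsJ, getD_map_range hk]
  have hyget : ∀ k, k < zs.length → (ysJ zs J).getD k 0 = yfun zs J k := by
    intro k hk
    rw [ysJ, getD_map_range hk]
  have hylb := yfun_lb hp hne
  refine ⟨?_, by omega, ?_, ?_, ?_, ?_, ?_⟩
  · intro hc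
    rw [← List.length_eq_zero_iff] at hc
    omega
  · -- x gaps
    intro k hk
    rw [hxlen] at hk
    rw [hxget k (by omega), hxget (k+1) (by omega)]
    have hgap := chain'_getD.mp hz.1 k (by omega)
    have hlbk := hylb k (by omega)
    have hlb1 := hylb (k+1) (by omega)
    rw [yfun]
    by_cases hm : zs.getD (k+1) 0 ∈ J
    · rw [if_pos hm]
      have := (Jfact hp hne (k+1) hk hm).2
      rcases this with h0 | hlt
      · omega
      · rw [show k + 1 - 1 = k by omega] at hlt
        omega
    · rw [if_neg hm]
      omega
  · -- y gaps
    intro k hk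
    rw [hxlen] at hk
    rw [hyget k (by omega), hyget (k+1) (by omega), yfun]
    by_cases hm : zs.getD (k+1) 0 ∈ J
    · rw [if_pos hm]; omega
    · rw [if_neg hm]; omega
  · -- x0 ≥ 1
    rw [hxget 0 (by omega)]
    have := hylb 0 (by omega)
    omega
  · -- y0 ≤ 1
    rw [hyget 0 (by omega), yfun]
    by_cases hm : zs.getD 0 0 ∈ J
    · rw [if_pos hm]
    · rw [if_neg hm]; omega
  · -- x0 = 1 → y0 = 0
    intro hx1
    rw [hxget 0 (by omega)] at hx1
    rw [hyget 0 (by omega), yfun] at *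
    by_cases hm : zs.getD 0 0 ∈ J
    · rw [if_pos hm] at hx1 ⊢
      have := (Jfact hp hne 0 (by omega) hm).1
      omega
    · rw [if_neg hm]

lemma psi_J (hp : IsMarked 3 (zs, J)) (hne : zs ≠ []) :
    psi (xsJ zs J) (ysJ zs J) = (zs, J) := by
  have hlen : 1 ≤ zs.length := by
    cases zs with
    | nil => exact absurd rfl hne
    | cons a t => simp
  have hfc := frobCond_J hp hne
  have hxlen : (xsJ zs J).length = zs.length := by simp [xsJ]
  have hylen : (ysJ zs J).length = zs.length := by simp [ysJ]
  have hxget : ∀ k, k < zs.length → (xsJ zs J).getD k 0 = zs.getD k 0 - yfun zs J k := by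
    intro k hk
    rw [xsJ, getD_map_range hk]
  have hyget : ∀ k, k < zs.length → (ysJ zs J).getD k 0 = yfun zs J k := by
    intro k hk
    rw [ysJ, getD_map_range hk]
  have hylb := yfun_lb hp hne
  have hzget : ∀ k, k < zs.length →
      (xsJ zs J).getD k 0 + (ysJ zs J).getD k 0 = zs.getD k 0 := by
    intro k hk
    rw [hxget k hk, hyget k hk]
    have := hylb k hk
    omega
  have hcondiff : ∀ a, 1 ≤ a → a ≤ zs.length →
      (condM (ysJ zs J) a ↔ zs.getD (a-1) 0 ∈ J) := by
    intro a h1a h2a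
    rcases Nat.lt_or_ge a 2 with ha2 | ha2
    · have ha1 : a = 1 := by omega
      subst ha1
      constructor
      · rintro (⟨-, hy⟩ | ⟨hc, -⟩)
        · rw [hyget 0 (by omega), yfun] at hy
          by_cases hm : zs.getD 0 0 ∈ J
          · exact hm
          · rw [if_neg hm] at hy; omega
        · omega
      · intro hm
        left
        refine ⟨rfl, ?_⟩
        rw [hyget 0 (by omega), yfun, if_pos hm]
    · constructor
      · rintro (⟨h1, -⟩ | ⟨-, hy⟩)
        · omega
        · rw [hyget (a-1) (by omega), hyget (a-2) (by omega),
            show a - 1 = (a-2) + 1 by omega, yfun] at hy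
          by_cases hm : zs.getD (a - 2 + 1) 0 ∈ J
          · rw [show a - 1 = a - 2 + 1 by omega]
            exact hm
          · rw [if_neg hm] at hy
            omega
      · intro hm
        right
        refine ⟨ha2, ?_⟩
        rw [hyget (a-1) (by omega), hyget (a-2) (by omega),
          show a - 1 = (a-2) + 1 by omega, yfun,
          if_pos (by rw [show a - 2 + 1 = a - 1 by omega]; exact hm)]
  have hfst : (psi (xsJ zs J) (ysJ zs J)).1 = zs := by
    apply list_eq_of_getD
    · rw [psi_fst_length, hxlen]
    · intro k hk
      rw [psi_fst_length, hxlen] at hk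
      rw [psi_fst_getD (by omega)]
      exact hzget k hk
  have hsnd : (psi (xsJ zs J) (ysJ zs J)).2 = J := by
    rw [psi_snd_def]
    apply Finset.ext
    intro v
    rw [Finset.mem_image]
    constructor
    · rintro ⟨a, ha, rfl⟩
      rw [Finset.mem_filter, Finset.mem_Icc, hxlen] at ha
      obtain ⟨⟨h1a, h2a⟩, hcond⟩ := ha
      have hmem := (hcondiff a h1a h2a).mp hcond
      rw [hzget (a-1) (by omega)]
      exact hmem
    · intro hv
      have hv' := hp.2 v hv
      rw [mem_leadingParts3 hne] at hv'
      obtain ⟨⟨k, hk, rfl, -⟩, -⟩ := hv'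
      refine ⟨k + 1, ?_, ?_⟩
      · rw [Finset.mem_filter, Finset.mem_Icc, hxlen]
        refine ⟨⟨by omega, by omega⟩, ?_⟩
        apply (hcondiff (k+1) (by omega) (by omega)).mpr
        rw [show k + 1 - 1 = k by omega]
        exact hv
      · rw [show k + 1 - 1 = k by omega]
        exact hzget k hk
  exact Prod.ext_iff.mpr ⟨hfst, hsnd⟩

end SURJ

end S13

open S13 in
/-- `S` is a bijection from the partitions of `n` with `m` distinct parts
onto the marked 3-partitions of `n` of length `m`. -/
theorem stmt_13 (n m : ℕ) (hn : 1 ≤ n) (hm : 1 ≤ m) :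
    Set.BijOn mapS
      {l : List ℕ | IsDistinctPartition l ∧ l.sum = n ∧ l.length = m}
      {p : List ℕ × Finset ℕ | IsMarked 3 p ∧ p.1.sum = n ∧ p.1.length + p.2.card = m} := by
  have memA : ∀ l : List ℕ, IsDistinctPartition l ∧ l.sum = n ∧ l.length = m →
      FrobCond (xsOf l) (ysOf l) ∧ phi (xsOf l) (ysOf l) = l ∧
        mapS l = psi (xsOf l) (ysOf l) := by
    intro l ⟨hdp, hsum, hlen⟩
    have hne : 1 ≤ l.length := by omega
    have hfc := frobCond_of hdp hne
    have hphi := phi_eq hdp hne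
    exact ⟨hfc, hphi, (congrArg mapS hphi).symm.trans (mapS_phi hfc)⟩
  refine ⟨?_, ?_, ?_⟩
  · -- MapsTo
    intro l hl
    rw [Set.mem_setOf_eq] at hl
    obtain ⟨hfc, hphi, hmap⟩ := memA l hl
    obtain ⟨hdp, hsum, hlen⟩ := hl
    rw [Set.mem_setOf_eq, hmap]
    refine ⟨psi_marked hfc, ?_, ?_⟩
    · rw [psi_fst_sum, ← phi_sum hfc, hphi, hsum]
    · rw [psi_fst_length]
      have hc := psi_snd_card hfc
      have hlb := FC.ylb hfc ((xsOf l).length - 1) (by have := FC.rpos hfc; omega)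
      have hlen2 := phi_length (xs := xsOf l) (ys := ysOf l)
      rw [hphi, urOf] at hlen2
      have hr := FC.rpos hfc
      omega
  · -- InjOn
    intro l1 hl1 l2 hl2 heq
    rw [Set.mem_setOf_eq] at hl1 hl2
    obtain ⟨hfc1, hphi1, hmap1⟩ := memA l1 hl1
    obtain ⟨hfc2, hphi2, hmap2⟩ := memA l2 hl2
    have : psi (xsOf l1) (ysOf l1) = psi (xsOf l2) (ysOf l2) := by
      rw [← hmap1, ← hmap2, heq]
    obtain ⟨hx, hy⟩ := psi_inj hfc1 hfc2 this
    rw [← hphi1, ← hphi2, hx, hy]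
  · -- SurjOn
    intro p hp
    rw [Set.mem_setOf_eq] at hp
    obtain ⟨hmk, hsum, hcl⟩ := hp
    obtain ⟨zs, J⟩ := p
    have hne : zs ≠ [] := by
      intro hc
      subst hc
      have hJ : J = ∅ := by
        apply Finset.eq_empty_of_forall_notMem
        intro v hv
        have := hmk.2 v hv
        rw [leadingParts, if_neg (by omega : ¬ (3:ℕ) = 2)] at this
        simp [blockStarts] at this
      rw [hJ] at hcl
      simp at hcl
      omega
    have hfc := frobCond_J hmk hne
    have hpsi := psi_J hmk hne
    have hxlen : (xsJ zs J).length = zs.length := by simp [xsJ]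
    refine ⟨phi (xsJ zs J) (ysJ zs J), ?_, ?_⟩
    · rw [Set.mem_setOf_eq]
      refine ⟨phi_distinct hfc, ?_, ?_⟩
      · rw [phi_sum hfc, ← psi_fst_sum, hpsi]
        exact hsum
      · rw [phi_length]
        have hc := psi_snd_card hfc
        have hlb := FC.ylb hfc ((xsJ zs J).length - 1) (by have := FC.rpos hfc; omega)
        rw [hpsi] at hc
        have hc' : J.card + (xsJ zs J).length
            = (ysJ zs J).getD ((xsJ zs J).length - 1) 0 + 1 := hc
        have hcl' : zs.length + J.card = m := hcl
        have hr := FC.rpos hfc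
        rw [urOf]
        omega
    · exact (mapS_phi hfc).trans hpsi
end

section
/- Let λ ∈ {2,3} and let L = (i_1, ..., i_{q−1}, i_q) be a λ-partition whose last part i_q is a leading part (index-1 minimal part of its block). Define t_λ(u,v) = (u−1, v−1) if λ=2; (u−2, v−1) if λ=3 and v−u=1; (u−1, v−2) if λ=3 and v−u=2; and let (u_{λ,r}(i), v_{λ,r}(i)) be the r-th iterate of t_λ applied to (⌊(i−1)/2⌋, ⌊(i+2)/2⌋). Then u_{λ,q−1}(i_q) ≥ 0, with equality if and only if λ = 3, q > 1, and i_q = 2 + 3(q−1). -/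
/-- The map `t_λ` of §3: `t₂(u,v) = (u−1,v−1)`; `t₃(u,v) = (u−2,v−1)` if `v−u = 1` and
`(u−1,v−2)` if `v−u = 2`. -/
def tStep (lam : ℕ) (p : ℤ × ℤ) : ℤ × ℤ :=
  if lam = 2 then (p.1 - 1, p.2 - 1)
  else if p.2 - p.1 = 1 then (p.1 - 2, p.2 - 1)
  else (p.1 - 1, p.2 - 2)

/-- `(u_{λ,r}(i), v_{λ,r}(i))`: the `r`-th iterate of `t_λ` applied to the canonical
splitting `(⌊(i−1)/2⌋, ⌊(i+2)/2⌋)` of `i`. -/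
def uvIter (lam r : ℕ) (i : ℕ) : ℤ × ℤ :=
  (tStep lam)^[r] (((i : ℤ) - 1) / 2, ((i : ℤ) + 2) / 2)


lemma chain_last_ge (lam p : ℕ) (t : List ℕ) (ht : t ≠ [])
    (h : List.Chain (fun a b => a + lam ≤ b) p t) :
    p + lam * t.length ≤ t.getLast ht := by
  induction t generalizing p with
  | nil => exact absurd rfl ht
  | cons b t ih =>
    obtain ⟨hpb, hbt⟩ := List.isChain_cons_cons.mp h
    cases t with
    | nil => simpa using by omega
    | cons c t' =>
      have h2 := ih (p := b) (by simp) hbt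
      rw [List.getLast_cons (by simp)]
      have he : lam * (b :: c :: t').length = lam * (c :: t').length + lam := by
        simp [List.length_cons]; ring
      omega

lemma blockStartsAux_last_ge (lam : ℕ) (hlam : 1 ≤ lam) (p : ℕ) (t : List ℕ) (ht : t ≠ [])
    (h : List.Chain (fun a b => a + lam ≤ b) p t)
    (hmem : t.getLast ht ∈ blockStartsAux lam p t) :
    p + lam * t.length + 1 ≤ t.getLast ht := by
  induction t generalizing p with
  | nil => exact absurd rfl ht
  | cons b t ih =>
    obtain ⟨hpb, hbt⟩ := List.isChain_cons_cons.mp h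
    cases t with
    | nil =>
      simp only [blockStartsAux, List.getLast_singleton] at hmem ⊢
      rcases Nat.lt_or_ge (p + lam) b with hc | hc
      · simpa using by omega
      · simp [Nat.not_lt.mpr hc] at hmem
    | cons c t' =>
      have hgt := chain_last_ge lam b (c :: t') (by simp) hbt
      have hp : 0 < lam * (c :: t').length := Nat.mul_pos (by omega) (by simp)
      rw [List.getLast_cons (by simp)] at hmem ⊢
      have hd : blockStartsAux lam p (b :: c :: t') =
          (if p + lam < b then [b] else []) ++ blockStartsAux lam b (c :: t') := rfl
      rw [hd, List.mem_append] at hmem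
      have hmem2 : (c :: t').getLast (by simp) ∈ blockStartsAux lam b (c :: t') := by
        rcases hmem with hm | hm
        · exfalso
          rcases Nat.lt_or_ge (p + lam) b with hc | hc
          · simp [hc] at hm; omega
          · simp [Nat.not_lt.mpr hc] at hm
        · exact hm
      have h2 := ih (p := b) (by simp) hbt hmem2
      have he : lam * (b :: c :: t').length = lam * (c :: t').length + lam := by
        simp [List.length_cons]; ring
      omega

lemma uvIter_two (r : ℕ) (i : ℕ) :
    uvIter 2 r i = (((i:ℤ) - 1) / 2 - r, ((i:ℤ) + 2) / 2 - r) := by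
  induction r with
  | zero => simp [uvIter]
  | succ n ih =>
    rw [uvIter, Function.iterate_succ_apply', ← uvIter, ih]
    simp only [tStep, if_pos rfl, if_true, eq_self_iff_true, reduceIte, Prod.mk.injEq]
    constructor <;> push_cast <;> ring

lemma uvIter_three (r : ℕ) (i : ℕ) :
    (uvIter 3 r i).1 + (uvIter 3 r i).2 = (i:ℤ) - 3 * r ∧
      ((uvIter 3 r i).2 - (uvIter 3 r i).1 = 1 ∨ (uvIter 3 r i).2 - (uvIter 3 r i).1 = 2) := by
  induction r with
  | zero => simp only [uvIter, Function.iterate_zero, id]; constructor <;> omega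
  | succ n ih =>
    rw [uvIter, Function.iterate_succ_apply', ← uvIter]
    obtain ⟨h1, h2⟩ := ih
    by_cases hd : (uvIter 3 n i).2 - (uvIter 3 n i).1 = 1 <;>
      simp only [tStep, hd, if_true, if_false, reduceIte] <;> push_cast <;> constructor <;> omega

/-- Lemma 4: if the last part `i_q` of a `λ`-partition with `q` parts is
a leading part, then `u_{λ,q−1}(i_q) ≥ 0`, with equality iff `λ = 3`, `q > 1` and
`i_q = 2 + 3(q−1)`. -/
theorem stmt_14 (lam : ℕ) (hlam : lam = 2 ∨ lam = 3) (l : List ℕ) (hne : l ≠ [])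
    (hl : IsLamPartition lam l) (hlead : l.getLast hne ∈ leadingParts lam l) :
    0 ≤ (uvIter lam (l.length - 1) (l.getLast hne)).1 ∧
      ((uvIter lam (l.length - 1) (l.getLast hne)).1 = 0 ↔
        lam = 3 ∧ 1 < l.length ∧ l.getLast hne = 2 + 3 * (l.length - 1)) := by
  obtain ⟨hchain, hpos⟩ := hl
  obtain ⟨a, t, rfl⟩ : ∃ a t, l = a :: t := by
    cases l with
    | nil => exact absurd rfl hne
    | cons a t => exact ⟨a, t, rfl⟩
  have hch : List.Chain (fun x y => x + lam ≤ y) a t := hchain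
  have hapos : 0 < a := hpos a (by simp)
  rcases hlam with rfl | rfl
  · -- lam = 2
    have hmem : (a :: t).getLast hne ∈ blockStarts 2 (a :: t) ∧
        (1 < (a :: t).getLast hne ∧ (a :: t).getLast hne % 2 = 1) := by
      simpa [leadingParts, List.mem_filter] using hlead
    obtain ⟨hbs, hgt1, hodd⟩ := hmem
    rw [uvIter_two]
    cases t with
    | nil =>
      simp only [List.getLast_singleton] at hgt1 hodd ⊢
      simp only [List.length_cons, List.length_nil]
      constructor
      · omega
      · constructor
        · intro h; exfalso; omega
        · rintro ⟨h, -⟩; omega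
    | cons c t' =>
      have hL : (a :: c :: t').length = t'.length + 2 := by simp
      have hlast : (a :: c :: t').getLast hne = (c :: t').getLast (by simp) :=
        List.getLast_cons (by simp)
      have hgap : a + 2 * (c :: t').length + 1 ≤ (c :: t').getLast (by simp) := by
        apply blockStartsAux_last_ge 2 (by omega) a (c :: t') (by simp) hch
        have hge := chain_last_ge 2 a (c :: t') (by simp) hch
        have hp : 0 < 2 * (c :: t').length := Nat.mul_pos (by omega) (by simp)
        have hne2 : (c :: t').getLast (by simp) ≠ a := by omega
        have hd : blockStarts 2 (a :: c :: t') = a :: blockStartsAux 2 a (c :: t') := rfl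
        rw [hd, hlast, List.mem_cons] at hbs
        tauto
      rw [hlast] at hgt1 hodd ⊢
      have hL2 : (c :: t').length = t'.length + 1 := by simp
      constructor
      · omega
      · constructor
        · intro h; exfalso; omega
        · rintro ⟨h, -⟩; omega
  · -- lam = 3
    have hmem : (a :: t).getLast hne ∈ blockStarts 3 (a :: t) ∧
        2 < (a :: t).getLast hne := by
      simpa [leadingParts, List.mem_filter] using hlead
    obtain ⟨hbs, hgt2⟩ := hmem
    obtain ⟨hsum, hdiff⟩ := uvIter_three ((a :: t).length - 1) ((a :: t).getLast hne)
    cases t with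
    | nil =>
      have hL : ([a] : List ℕ).length = 1 := rfl
      rw [hL] at hsum hdiff ⊢
      have hlast : ([a] : List ℕ).getLast hne = a := rfl
      rw [hlast] at hsum hdiff hgt2 ⊢
      omega
    | cons c t' =>
      have hL : (a :: c :: t').length = t'.length + 2 := by simp
      have hlast : (a :: c :: t').getLast hne = (c :: t').getLast (by simp) :=
        List.getLast_cons (by simp)
      have hgap : a + 3 * (c :: t').length + 1 ≤ (c :: t').getLast (by simp) := by
        apply blockStartsAux_last_ge 3 (by omega) a (c :: t') (by simp) hch
        have hge := chain_last_ge 3 a (c :: t') (by simp) hch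
        have hp : 0 < 3 * (c :: t').length := Nat.mul_pos (by omega) (by simp)
        have hne2 : (c :: t').getLast (by simp) ≠ a := by omega
        have hd : blockStarts 3 (a :: c :: t') = a :: blockStartsAux 3 a (c :: t') := rfl
        rw [hd, hlast, List.mem_cons] at hbs
        tauto
      have hL2 : (c :: t').length = t'.length + 1 := by simp
      rw [hlast] at hsum hdiff hgt2 ⊢
      omega
end

section
/- Let λ ∈ {2,3} and let L = (i_1, ..., i_{q−1}, i_q, i_{q+1}, ..., i_s) be a λ-partition with i_q a marked (leading) part. Then there exists a unique r ∈ {0,1,...,q−1} such that i_{q−r−1} < u_{λ,r}(i_q) < v_{λ,r}(i_q) ≤ i_{q−r} (with the convention i_0 = 0), where (u_{λ,r}, v_{λ,r}) denotes the r-th iterate of t_λ applied to the canonical splitting (⌊(i_q−1)/2⌋, ⌊(i_q+2)/2⌋). -/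
/-- The `k`-th part of the partition `l` (1-indexed), with the convention `i₀ = 0`. -/
def partAt (l : List ℕ) (k : ℕ) : ℕ := if k = 0 then 0 else l.getD (k - 1) 0

namespace Stmt15Aux

lemma tStep2 (p : ℤ × ℤ) : tStep 2 p = (p.1 - 1, p.2 - 1) := by simp [tStep]

lemma tStep3₁ (p : ℤ × ℤ) (h : p.2 - p.1 = 1) : tStep 3 p = (p.1 - 2, p.2 - 1) := by
  simp [tStep, h]

lemma tStep3₂ (p : ℤ × ℤ) (h : ¬ p.2 - p.1 = 1) : tStep 3 p = (p.1 - 1, p.2 - 2) := by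
  simp [tStep, h]

lemma uvIter_succ (lam r : ℕ) (i : ℕ) :
    uvIter lam (r+1) i = tStep lam (uvIter lam r i) := by
  unfold uvIter
  rw [Function.iterate_succ_apply']

lemma uvIter_sum {lam : ℕ} (hlam : lam = 2 ∨ lam = 3) (i r : ℕ) :
    (uvIter lam r i).1 + (uvIter lam r i).2 = (i : ℤ) - lam * r := by
  induction r with
  | zero => simp [uvIter]; omega
  | succ n ih =>
    rw [uvIter_succ]
    rcases hlam with rfl | rfl
    · rw [tStep2]
      push_cast at *
      omega
    · by_cases h : (uvIter 3 n i).2 - (uvIter 3 n i).1 = 1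
      · rw [tStep3₁ _ h]; push_cast at *; omega
      · rw [tStep3₂ _ h]; push_cast at *; omega

lemma uvIter_diff {lam : ℕ} (hlam : lam = 2 ∨ lam = 3) (i : ℕ)
    (hodd : lam = 2 → i % 2 = 1) (r : ℕ) :
    (uvIter lam r i).2 - (uvIter lam r i).1 = 1 ∨
      (lam = 3 ∧ (uvIter lam r i).2 - (uvIter lam r i).1 = 2) := by
  induction r with
  | zero =>
    rcases hlam with rfl | rfl
    · have h2 := hodd rfl
      left; simp only [uvIter, Function.iterate_zero, id]; omega
    · simp only [uvIter, Function.iterate_zero, id]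
      rcases Nat.even_or_odd i with h | h
      · refine Or.inr ⟨by norm_num, ?_⟩
        obtain ⟨c, hc⟩ := h; omega
      · left; obtain ⟨c, hc⟩ := h; omega
  | succ n ih =>
    rw [uvIter_succ]
    rcases hlam with rfl | rfl
    · rcases ih with h | ⟨h23, _⟩
      · left; rw [tStep2]; omega
      · omega
    · rcases ih with h | ⟨_, h⟩
      · rw [tStep3₁ _ h]; exact Or.inr ⟨by norm_num, by omega⟩
      · rw [tStep3₂ _ (by omega)]; left; omega

lemma uvIter_vsucc {lam : ℕ} (hlam : lam = 2 ∨ lam = 3) (i : ℕ)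
    (hodd : lam = 2 → i % 2 = 1) (r : ℕ) :
    (uvIter lam (r+1) i).2 = (uvIter lam r i).1 := by
  have hd := uvIter_diff hlam i hodd r
  rw [uvIter_succ]
  rcases hlam with rfl | rfl
  · rw [tStep2]
    rcases hd with h | ⟨h, _⟩
    · omega
    · omega
  · rcases hd with h | ⟨_, h⟩
    · rw [tStep3₁ _ h]; omega
    · rw [tStep3₂ _ (by omega)]; omega

lemma mem_blockStartsAux {lam : ℕ} {x : ℕ} : ∀ {p : ℕ} {t : List ℕ},
    x ∈ blockStartsAux lam p t → x ∈ t
  | p, [], h => by simp [blockStartsAux] at h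
  | p, a :: t, h => by
    unfold blockStartsAux at h
    rcases List.mem_append.1 h with h | h
    · split at h <;> simp_all
    · exact List.mem_cons_of_mem _ (mem_blockStartsAux h)

lemma chain_head_le {lam : ℕ} : ∀ {a : ℕ} {t : List ℕ},
    (a :: t).Chain' (fun x y => x + lam ≤ y) → ∀ x ∈ t, a + lam ≤ x
  | a, [], _, x, hx => by simp at hx
  | a, b :: t, h, x, hx => by
    simp only [List.Chain', List.isChain_cons_cons] at h
    rcases List.mem_cons.1 hx with rfl | hx
    · exact h.1
    · have := chain_head_le h.2 x hx
      omega

lemma getD_mem {l : List ℕ} {j : ℕ} (h : j < l.length) : l.getD j 0 ∈ l := by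
  rw [List.getD_eq_getElem l 0 h]; exact List.getElem_mem h

lemma blockStartsAux_gap {lam : ℕ} (hlam1 : 1 ≤ lam) : ∀ (p : ℕ) (t : List ℕ),
    (p :: t).Chain' (fun x y => x + lam ≤ y) →
    ∀ j, j < t.length → t.getD j 0 ∈ blockStartsAux lam p t →
      (p :: t).getD j 0 + lam < t.getD j 0
  | p, [], _, j, hj, _ => by simp at hj
  | p, a :: t, hc, 0, hj, hm => by
    have hc' := (List.isChain_cons_cons.1 hc).2
    unfold blockStartsAux at hm
    simp only [List.getD_cons_zero] at hm ⊢
    rcases List.mem_append.1 hm with h | h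
    · split at h
      · simpa using ‹p + lam < a›
      · simp at h
    · exfalso
      have hx := mem_blockStartsAux h
      have := chain_head_le hc' a hx
      omega
  | p, a :: t, hc, (j+1), hj, hm => by
    have hc' := (List.isChain_cons_cons.1 hc).2
    unfold blockStartsAux at hm
    simp only [List.getD_cons_succ] at hm ⊢
    have hj' : j < t.length := by
      simp only [List.length_cons] at hj; omega
    have hxmem : t.getD j 0 ∈ t := getD_mem hj'
    rcases List.mem_append.1 hm with h | h
    · exfalso
      split at h
      · have hxa : t.getD j 0 = a := by simpa using h
        have := chain_head_le hc' _ hxmem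
        omega
      · simp at h
    · exact blockStartsAux_gap hlam1 a t hc' j hj' h

lemma blockStarts_gap {lam : ℕ} (l : List ℕ)
    (hc : l.Chain' (fun x y => x + lam ≤ y)) (hlam2 : 2 ≤ lam) (q : ℕ)
    (h2 : 2 ≤ q) (hq : q ≤ l.length)
    (hm : l.getD (q-1) 0 ∈ blockStarts lam l) :
    l.getD (q-2) 0 + lam < l.getD (q-1) 0 := by
  cases l with
  | nil => simp at hq; omega
  | cons a t =>
    have hlen : q - 2 < t.length := by
      simp only [List.length_cons] at hq; omega
    have e1 : q - 1 = (q - 2) + 1 := by omega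
    rw [e1] at hm ⊢
    simp only [List.getD_cons_succ] at hm ⊢
    unfold blockStarts at hm
    have hxmem : t.getD (q-2) 0 ∈ t := getD_mem hlen
    rcases List.mem_cons.1 hm with h | h
    · exfalso
      have := chain_head_le hc _ hxmem
      omega
    · exact blockStartsAux_gap (by omega) a t hc (q-2) hlen h

lemma partAt_pos {l : List ℕ} (hp : ∀ i ∈ l, 0 < i) {k : ℕ}
    (h1 : 1 ≤ k) (h2 : k ≤ l.length) : 0 < partAt l k := by
  unfold partAt
  rw [if_neg (by omega)]
  exact hp _ (getD_mem (by omega))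

lemma partAt_chain {lam : ℕ} {l : List ℕ}
    (hc : l.Chain' (fun x y => x + lam ≤ y)) {k : ℕ}
    (h1 : 1 ≤ k) (h2 : k + 1 ≤ l.length) :
    partAt l k + lam ≤ partAt l (k+1) := by
  unfold partAt
  rw [if_neg (by omega), if_neg (by omega)]
  have h := List.isChain_iff_getElem.1 hc (k-1) (by omega)
  rw [show k + 1 - 1 = k from by omega]
  rw [List.getD_eq_getElem l 0 (by omega : k - 1 < l.length),
      List.getD_eq_getElem l 0 (by omega : k < l.length)]
  simp only [show k - 1 + 1 = k from by omega] at h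
  exact h

lemma partAt_tele {lam : ℕ} {l : List ℕ}
    (hc : l.Chain' (fun x y => x + lam ≤ y)) :
    ∀ (d k : ℕ), 1 ≤ k → k + d ≤ l.length →
      partAt l k + lam * d ≤ partAt l (k + d) := by
  intro d
  induction d with
  | zero => simp
  | succ n ih =>
    intro k h1 h2
    have ha := ih k h1 (by omega)
    have hb := partAt_chain hc (k := k + n) (by omega) (by omega)
    have e : k + (n+1) = (k+n)+1 := by omega
    rw [e, Nat.mul_succ]
    generalize lam * n = m at ha
    omega

end Stmt15Aux


/-- Lemma 5: if the `q`-th part `i_q` of a `λ`-partition is a leading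
part, then there is a unique `r ∈ {0,…,q−1}` with
`i_{q−r−1} < u_{λ,r}(i_q) < v_{λ,r}(i_q) ≤ i_{q−r}` (with `i₀ = 0`). -/
theorem stmt_15 (lam : ℕ) (hlam : lam = 2 ∨ lam = 3) (l : List ℕ)
    (hl : IsLamPartition lam l) (q : ℕ) (hq1 : 1 ≤ q) (hq2 : q ≤ l.length)
    (hlead : l.getD (q - 1) 0 ∈ leadingParts lam l) :
    ∃! r : ℕ, r ≤ q - 1 ∧
      (partAt l (q - r - 1) : ℤ) < (uvIter lam r (l.getD (q - 1) 0)).1 ∧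
      (uvIter lam r (l.getD (q - 1) 0)).1 < (uvIter lam r (l.getD (q - 1) 0)).2 ∧
      (uvIter lam r (l.getD (q - 1) 0)).2 ≤ (partAt l (q - r) : ℤ) := by
  classical
  obtain ⟨hc, hp⟩ := hl
  have hlam2 : 2 ≤ lam := by rcases hlam with rfl | rfl <;> omega
  set i := l.getD (q - 1) 0 with hidef
  -- facts from being a leading part
  have hfacts : i ∈ blockStarts lam l ∧ 3 ≤ i ∧ (lam = 2 → i % 2 = 1) := by
    rcases hlam with h2 | h3
    · rw [leadingParts, if_pos h2] at hlead
      obtain ⟨hbs, hp2⟩ := List.mem_filter.1 hlead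
      simp only [decide_eq_true_eq] at hp2
      refine ⟨by rw [h2]; exact hbs, by omega, fun _ => hp2.2⟩
    · rw [leadingParts, if_neg (by omega)] at hlead
      obtain ⟨hbs, hp2⟩ := List.mem_filter.1 hlead
      simp only [decide_eq_true_eq] at hp2
      exact ⟨hbs, by omega, fun h => by omega⟩
  obtain ⟨hbs, hi3, hodd⟩ := hfacts
  have hsum := Stmt15Aux.uvIter_sum hlam i
  have hvs := Stmt15Aux.uvIter_vsucc hlam i hodd
  have hdle : ∀ r, 1 ≤ (uvIter lam r i).2 - (uvIter lam r i).1 ∧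
      (uvIter lam r i).2 - (uvIter lam r i).1 ≤ 2 := by
    intro r
    rcases Stmt15Aux.uvIter_diff hlam i hodd r with h | ⟨_, h⟩ <;> omega
  set A : ℕ → Prop := fun s => (uvIter lam s i).2 ≤ (partAt l (q - s) : ℤ) with hAdef
  have hApartq : partAt l q = i := by
    unfold partAt; rw [if_neg (by omega)]
  have hA0 : A 0 := by
    show (uvIter lam 0 i).2 ≤ (partAt l (q - 0) : ℤ)
    have h1 := hsum 0
    have h2 := hdle 0
    rw [Nat.sub_zero, hApartq]
    rcases hlam with rfl | rfl <;> (push_cast at h1 ⊢; omega)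
  -- the monotone propagation step
  have hstep : ∀ s, s + 1 ≤ q - 1 → ¬ A s → ¬ A (s+1) := by
    intro s hs hAs hAs1
    have hub : (partAt l (q - s) : ℤ) < (uvIter lam s i).2 := lt_of_not_ge hAs
    have hch : partAt l (q - s - 1) + lam ≤ partAt l (q - s) := by
      have h := Stmt15Aux.partAt_chain hc (k := q - s - 1) (by omega) (by omega)
      rwa [show q - s - 1 + 1 = q - s from by omega] at h
    have hv := hvs s
    have hd := hdle s
    have hx : (uvIter lam (s+1) i).2 ≤ (partAt l (q - (s+1)) : ℤ) := hAs1
    rw [hv, show q - (s+1) = q - s - 1 from by omega] at hx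
    have hch' : (partAt l (q - s - 1) : ℤ) + lam ≤ (partAt l (q - s) : ℤ) := by
      exact_mod_cast hch
    have hl2 : (2 : ℤ) ≤ (lam : ℤ) := by exact_mod_cast hlam2
    omega
  -- A (q-1) and A q cannot both hold
  have hAq : ¬ (A (q-1) ∧ A q) := by
    rintro ⟨h1, h2⟩
    have h2' : (uvIter lam q i).2 ≤ 0 := by
      have hx : (uvIter lam q i).2 ≤ (partAt l (q - q) : ℤ) := h2
      rwa [Nat.sub_self, show partAt l 0 = 0 from rfl, Nat.cast_zero] at hx
    have hv : (uvIter lam q i).2 = (uvIter lam (q-1) i).1 := by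
      have h := hvs (q-1)
      rwa [show q - 1 + 1 = q from by omega] at h
    have hs := hsum (q-1)
    have hd := hdle (q-1)
    have h1' : (uvIter lam (q-1) i).2 ≤ (partAt l (q - (q-1)) : ℤ) := h1
    rw [show q - (q-1) = 1 from by omega] at h1'
    rcases Nat.lt_or_ge q 2 with hq' | hq'
    · -- q = 1
      have e0 : q - 1 = 0 := by omega
      rw [e0] at hv hs hd
      rcases hlam with rfl | rfl <;> (push_cast at hs ⊢; omega)
    · -- q ≥ 2
      have htel := Stmt15Aux.partAt_tele hc (q-2) 1 (by omega) (by omega)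
      rw [show 1 + (q-2) = q - 1 from by omega] at htel
      have hgap := Stmt15Aux.blockStarts_gap l hc hlam2 q hq' hq2 hbs
      rw [← hidef] at hgap
      have hpa : partAt l (q-1) = l.getD (q-2) 0 := by
        unfold partAt
        rw [if_neg (by omega), show q - 1 - 1 = q - 2 from by omega]
      rw [← hpa] at hgap
      rcases hlam with rfl | rfl <;>
        (push_cast at hs h1' h2' htel hgap ⊢; omega)
  -- existence of a failure point
  have hex : ∃ s, s ≤ q ∧ ¬ A s := by
    by_contra hno
    push_neg at hno
    exact hAq ⟨hno (q-1) (by omega), hno q le_rfl⟩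
  set s₀ := Nat.find hex with hs₀def
  have hspec : s₀ ≤ q ∧ ¬ A s₀ := by rw [hs₀def]; exact Nat.find_spec hex
  have hs₀pos : 1 ≤ s₀ := by
    by_contra h
    have hz : s₀ = 0 := by omega
    rw [hz] at hspec
    exact hspec.2 hA0
  set r := s₀ - 1 with hrdef
  have hAr : A r := by
    by_contra hA'
    exact Nat.find_min hex (show r < Nat.find hex by omega) ⟨by omega, hA'⟩
  have hnAr1 : ¬ A (r+1) := by
    rw [show r + 1 = s₀ from by omega]
    exact hspec.2
  have hrq : r ≤ q - 1 := by omega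
  -- monotone propagation of failure
  have hmono : ∀ b, b ≤ q - 1 → ∀ a, a ≤ b → ¬ A a → ¬ A b := by
    intro b
    induction b with
    | zero =>
      intro _ a ha hA'
      interval_cases a
      exact hA'
    | succ n ihn =>
      intro hb a ha hA'
      rcases Nat.lt_or_ge a (n+1) with h | h
      · exact hstep n (by omega) (ihn (by omega) a (by omega) hA')
      · have : a = n + 1 := by omega
        subst this
        exact hA'
  refine ⟨r, ⟨hrq, ?_, ?_, ?_⟩, ?_⟩
  · -- first inequality
    have h1 : (partAt l (q - (r+1)) : ℤ) < (uvIter lam (r+1) i).2 := by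
      by_contra h
      exact hnAr1 (not_lt.1 h)
    rwa [hvs r, show q - (r+1) = q - r - 1 from by omega] at h1
  · have := hdle r
    omega
  · exact hAr
  · rintro r' ⟨hr'q, hb', _, ha'⟩
    by_contra hne
    have hA'r' : A r' := ha'
    have hnA' : ¬ A (r'+1) := by
      intro hAx
      have hx : (uvIter lam (r'+1) i).2 ≤ (partAt l (q - (r'+1)) : ℤ) := hAx
      rw [hvs r', show q - (r'+1) = q - r' - 1 from by omega] at hx
      exact absurd hb' (not_lt.2 hx)
    rcases Nat.lt_or_ge r r' with h | h
    · exact (hmono r' hr'q (r+1) (by omega) hnAr1) hA'r'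
    · exact (hmono r hrq (r'+1) (by omega) hnA') hAr
end
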